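/- arXiv:2502.19006 — 2 statements merged into one kernel-verified Lean document; each statement's English description precedes it below -/
import Mathlib

section
/- Cumulative regret for GP-UCB under a Matérn-type information-gain bound, case d > ν: assume k(x, x) ≤ 1 for all x ∈ X, that the Matérn-type information-gain hypothesis holds, and that d > ν. Let f belong to the pre-RKHS of k with ‖f‖_k ≤ B for some B > 0, let x* ∈ X satisfy f(x*) = sup_{x ∈ X} f(x), and suppose the sequence (x_t)_{t≥1} follows the GP-UCB rule with parameter B. Then for every T ∈ ℕ₊, the cumulative regret satisfies ∑_{t=1}^T (f(x*) − f(x_t)) ≤ 2B (T̄_Mat + C̃_Mat^{1/2} (d/(d−ν)) T^{(d−ν)/d} (ln T)^{ν/d}). -/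
set_option maxHeartbeats 1000000


open Matrix

noncomputable section

/-- Gram matrix `K = [k(x_i, x_j)]` of the kernel `k` on the finite family `xs`. -/
def gram {X ι : Type*} [Fintype ι] (k : X → X → ℝ) (xs : ι → X) :
    Matrix ι ι ℝ := fun i j => k (xs i) (xs j)

/-- Kernel vector `k_t(x) = (k(x₁, x), …, k(x_t, x))`. -/
def kvec {X ι : Type*} [Fintype ι] (k : X → X → ℝ) (xs : ι → X) (x : X) :
    ι → ℝ := fun i => k (xs i) x

/-- Regularized posterior variance `σ²_{λ²}(x; xs) = k(x,x) - k_t(x)ᵀ (K + λ² I)⁻¹ k_t(x)`.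
For the empty family this is `k(x,x)`. -/
def postVar {X ι : Type*} [Fintype ι] [DecidableEq ι] (k : X → X → ℝ)
    (xs : ι → X) (lam : ℝ) (x : X) : ℝ :=
  k x x - kvec k xs x ⬝ᵥ ((gram k xs + lam ^ 2 • (1 : Matrix ι ι ℝ))⁻¹ *ᵥ kvec k xs x)

/-- Noise-free posterior standard deviation `σ(x; xs) = inf_{λ > 0} σ_{λ²}(x; xs)`. -/
def postStd {X ι : Type*} [Fintype ι] [DecidableEq ι] (k : X → X → ℝ)
    (xs : ι → X) (x : X) : ℝ :=
  ⨅ lam : {l : ℝ // 0 < l}, Real.sqrt (postVar k xs lam.1 x)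

/-- Maximum information gain `γ_T(λ²) = sup_{x₁,…,x_T} (1/2) ln det (I_T + λ⁻² K_T)`,
a value in `[0, ∞]`. -/
def mig {X : Type*} (k : X → X → ℝ) (T : ℕ) (lam : ℝ) : ENNReal :=
  ⨆ xs : Fin T → X, ENNReal.ofReal
    ((1 / 2) * Real.log ((1 + (lam ^ 2)⁻¹ • gram k xs).det))

/-- The prefix `X_{t-1} = (x₁, …, x_{t-1})` of a finite sequence (`t` is 0-indexed). -/
def pre {X : Type*} {T : ℕ} (xs : Fin T → X) (t : Fin T) : Fin t.1 → X :=
  fun i => xs ⟨i.1, i.2.trans t.2⟩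

/-- Noise-free posterior mean `μ(x; xs) = k_t(x)ᵀ K⁻¹ (f(x₁), …, f(x_t))ᵀ`
(for the empty family this is `0`). -/
def postMean {X ι : Type*} [Fintype ι] [DecidableEq ι] (k : X → X → ℝ)
    (xs : ι → X) (f : X → ℝ) (x : X) : ℝ :=
  kvec k xs x ⬝ᵥ ((gram k xs)⁻¹ *ᵥ fun i => f (xs i))

/-- Noise-free posterior standard deviation in closed form,
`σ(x; xs) = (k(x,x) - k_t(x)ᵀ K⁻¹ k_t(x))^{1/2}` (for the empty family, `k(x,x)^{1/2}`). -/
def postStdInv {X ι : Type*} [Fintype ι] [DecidableEq ι] (k : X → X → ℝ)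
    (xs : ι → X) (x : X) : ℝ :=
  Real.sqrt (k x x - kvec k xs x ⬝ᵥ ((gram k xs)⁻¹ *ᵥ kvec k xs x))

/-- The first `t` points `X_t = (x₁, …, x_t)` of an infinite sequence. -/
def prefN {X : Type*} (xseq : ℕ → X) (t : ℕ) : Fin t → X := fun i => xseq i


section RegretHelpers

variable {X : Type*} {k : X → X → ℝ}

/-- Auxiliary double-sum kernel quadratic/bilinear form. -/
def qf (k : X → X → ℝ) {ι : Type*} [Fintype ι] (xs : ι → X) (a b : ι → ℝ) : ℝ :=
  ∑ i, ∑ j, a i * b j * k (xs i) (xs j)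

lemma qf_nonneg (hpsd : ∀ (n : ℕ) (xv : Fin n → X) (c : Fin n → ℝ),
      0 ≤ ∑ i, ∑ j, c i * c j * k (xv i) (xv j))
    {ι : Type*} [Fintype ι] (xs : ι → X) (a : ι → ℝ) : 0 ≤ qf k xs a a := by
  classical
  set e := Fintype.equivFin ι
  have h := hpsd (Fintype.card ι) (xs ∘ e.symm) (a ∘ e.symm)
  have h2 : ∑ i, ∑ j, (a ∘ e.symm) i * (a ∘ e.symm) j * k ((xs ∘ e.symm) i) ((xs ∘ e.symm) j)
      = qf k xs a a := by
    rw [qf]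
    rw [← Equiv.sum_comp e.symm (fun i => ∑ j, a i * a j * k (xs i) (xs j))]
    refine Finset.sum_congr rfl fun i _ => ?_
    exact Equiv.sum_comp e.symm (fun j => a (e.symm i) * a j * k (xs (e.symm i)) (xs j))
  rw [← h2]; exact h

lemma qf_swap (hsym : ∀ x y : X, k x y = k y x)
    {ι : Type*} [Fintype ι] (xs : ι → X) (a b : ι → ℝ) : qf k xs a b = qf k xs b a := by
  rw [qf, qf, Finset.sum_comm]
  exact Finset.sum_congr rfl fun j _ => Finset.sum_congr rfl fun i _ => by
    rw [hsym (xs i) (xs j)]; ring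

lemma qf_sq_le (hsym : ∀ x y : X, k x y = k y x)
    (hpsd : ∀ (n : ℕ) (xv : Fin n → X) (c : Fin n → ℝ),
      0 ≤ ∑ i, ∑ j, c i * c j * k (xv i) (xv j))
    {ι : Type*} [Fintype ι] (xs : ι → X) (a b : ι → ℝ) :
    (qf k xs a b) ^ 2 ≤ qf k xs a a * qf k xs b b := by
  classical
  have expand : ∀ s : ℝ, qf k xs (fun i => a i + s * b i) (fun i => a i + s * b i)
      = qf k xs a a + s * qf k xs a b + s * qf k xs b a + s ^ 2 * qf k xs b b := by
    intro s
    simp only [qf, Finset.mul_sum, ← Finset.sum_add_distrib]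
    exact Finset.sum_congr rfl fun i _ => Finset.sum_congr rfl fun j _ => by ring
  have key : ∀ s : ℝ, 0 ≤ qf k xs b b * (s * s) + (2 * qf k xs a b) * s + qf k xs a a := by
    intro s
    have h0 := qf_nonneg hpsd xs (fun i => a i + s * b i)
    rw [expand s, qf_swap hsym xs b a] at h0
    nlinarith [h0]
  have hd := discrim_le_zero key
  rw [discrim] at hd
  nlinarith [hd]


lemma gram_transpose (hsym : ∀ x y : X, k x y = k y x) {t : ℕ} (z : Fin t → X) :
    (gram k z)ᵀ = gram k z := by
  ext i j; exact hsym (z j) (z i)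

lemma qf_dot {t : ℕ} (z : Fin t → X) (a b : Fin t → ℝ) :
    a ⬝ᵥ (gram k z *ᵥ b) = qf k z a b := by
  simp only [dotProduct, Matrix.mulVec, dotProduct, _root_.gram, qf, Finset.mul_sum]
  exact Finset.sum_congr rfl fun i _ => Finset.sum_congr rfl fun j _ => by ring

lemma qf_elim_eq (hsym : ∀ x y : X, k x y = k y x) {t : ℕ} (z : Fin t → X) (y : X)
    (dv : Fin t → ℝ) (e : ℝ) :
    qf k (Sum.elim z fun _ : Unit => y) (Sum.elim dv fun _ => e) (Sum.elim dv fun _ => e)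
      = dv ⬝ᵥ (gram k z *ᵥ dv) + 2 * e * (dv ⬝ᵥ kvec k z y) + e ^ 2 * k y y := by
  classical
  have hsplit : qf k (Sum.elim z fun _ : Unit => y) (Sum.elim dv fun _ => e)
        (Sum.elim dv fun _ => e)
      = ((∑ i, ∑ j, dv i * dv j * k (z i) (z j)) + (∑ i, dv i * e * k (z i) y))
        + ((∑ j, e * dv j * k y (z j)) + e * e * k y y) := by
    rw [qf, Fintype.sum_sum_type]
    congr 1
    · rw [← Finset.sum_add_distrib]
      refine Finset.sum_congr rfl fun i _ => ?_
      rw [Fintype.sum_sum_type]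
      simp
    · rw [Fintype.sum_unique]
      rw [Fintype.sum_sum_type]
      simp
  rw [hsplit]
  have hA : (∑ i, ∑ j, dv i * dv j * k (z i) (z j)) = dv ⬝ᵥ (gram k z *ᵥ dv) := by
    rw [qf_dot]; rfl
  have hB : (∑ i, dv i * e * k (z i) y) = e * (dv ⬝ᵥ kvec k z y) := by
    simp only [dotProduct, kvec, Finset.mul_sum]
    exact Finset.sum_congr rfl fun i _ => by ring
  have hC : (∑ j, e * dv j * k y (z j)) = e * (dv ⬝ᵥ kvec k z y) := by
    simp only [dotProduct, kvec, Finset.mul_sum]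
    refine Finset.sum_congr rfl fun i _ => ?_
    rw [hsym y (z i)]; ring
  rw [hA, hB, hC]
  ring

/-- `k y y - kᵀ K⁻¹ k ≤ k y y - 2 dᵀk + dᵀ K d` for all `d`. -/
lemma proj_bound (hsym : ∀ x y : X, k x y = k y x)
    (hpsd : ∀ (n : ℕ) (xv : Fin n → X) (c : Fin n → ℝ),
      0 ≤ ∑ i, ∑ j, c i * c j * k (xv i) (xv j))
    {t : ℕ} (z : Fin t → X) (y : X)
    (hK : gram k z * (gram k z)⁻¹ = 1) (d : Fin t → ℝ) :
    k y y - kvec k z y ⬝ᵥ ((gram k z)⁻¹ *ᵥ kvec k z y)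
      ≤ k y y - 2 * (d ⬝ᵥ kvec k z y) + d ⬝ᵥ (gram k z *ᵥ d) := by
  classical
  set G := gram k z with hG
  set kv := kvec k z y with hkv
  set w : Fin t → ℝ := G⁻¹ *ᵥ kv with hw
  have hGw : G *ᵥ w = kv := by
    rw [hw, Matrix.mulVec_mulVec, hK, Matrix.one_mulVec]
  have h0 : 0 ≤ (d - w) ⬝ᵥ (G *ᵥ (d - w)) := by
    rw [qf_dot]; exact qf_nonneg hpsd z _
  have hwGd : w ⬝ᵥ (G *ᵥ d) = d ⬝ᵥ kv := by
    rw [Matrix.dotProduct_mulVec, ← Matrix.mulVec_transpose, gram_transpose hsym, ← hG, hGw,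
      dotProduct_comm]
  have hexp : (d - w) ⬝ᵥ (G *ᵥ (d - w))
      = d ⬝ᵥ (G *ᵥ d) - 2 * (d ⬝ᵥ kv) + kv ⬝ᵥ w := by
    rw [Matrix.mulVec_sub, dotProduct_sub, sub_dotProduct, sub_dotProduct,
      hGw, hwGd]
    have h1 : w ⬝ᵥ kv = kv ⬝ᵥ w := dotProduct_comm _ _
    have h2 : d ⬝ᵥ kv = kv ⬝ᵥ d := dotProduct_comm _ _
    have h3 : w ⬝ᵥ (G *ᵥ w) = kv ⬝ᵥ w := by rw [hGw]; exact dotProduct_comm _ _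
    linarith [h1, h2, h3]
  rw [hexp] at h0
  linarith [h0]

lemma err_nonneg (hsym : ∀ x y : X, k x y = k y x)
    (hpsd : ∀ (n : ℕ) (xv : Fin n → X) (c : Fin n → ℝ),
      0 ≤ ∑ i, ∑ j, c i * c j * k (xv i) (xv j))
    {t : ℕ} (z : Fin t → X) (y : X)
    (hK : gram k z * (gram k z)⁻¹ = 1) :
    0 ≤ k y y - kvec k z y ⬝ᵥ ((gram k z)⁻¹ *ᵥ kvec k z y) := by
  classical
  set G := gram k z with hG
  set kv := kvec k z y with hkv
  set w : Fin t → ℝ := G⁻¹ *ᵥ kv with hw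
  have hGw : G *ᵥ w = kv := by
    rw [hw, Matrix.mulVec_mulVec, hK, Matrix.one_mulVec]
  have h0 : 0 ≤ qf k (Sum.elim z fun _ : Unit => y)
      (Sum.elim (fun i => - w i) fun _ => (1:ℝ)) (Sum.elim (fun i => - w i) fun _ => (1:ℝ)) :=
    qf_nonneg hpsd _ _
  rw [qf_elim_eq hsym] at h0
  have h1 : (fun i => - w i) ⬝ᵥ (G *ᵥ fun i => - w i) = w ⬝ᵥ (G *ᵥ w) := by
    have : (fun i => - w i) = -w := rfl
    rw [this, Matrix.mulVec_neg, neg_dotProduct, dotProduct_neg, neg_neg]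
  have h2 : (fun i => - w i) ⬝ᵥ kv = -(w ⬝ᵥ kv) := by
    have : (fun i => - w i) = -w := rfl
    rw [this, neg_dotProduct]
  have h3 : w ⬝ᵥ (G *ᵥ w) = kv ⬝ᵥ w := by rw [hGw]; exact dotProduct_comm _ _
  have h4 : w ⬝ᵥ kv = kv ⬝ᵥ w := dotProduct_comm _ _
  rw [h1, h2, h3, h4] at h0
  linarith [h0]


lemma qf_elim_left {ι₁ ι₂ : Type*} [Fintype ι₁] [Fintype ι₂] (xs1 : ι₁ → X) (xs2 : ι₂ → X)
    (a b : ι₁ → ℝ) :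
    qf k (Sum.elim xs1 xs2) (Sum.elim a 0) (Sum.elim b 0) = qf k xs1 a b := by
  simp [qf, Fintype.sum_sum_type]

lemma qf_elim_right {ι₁ ι₂ : Type*} [Fintype ι₁] [Fintype ι₂] (xs1 : ι₁ → X) (xs2 : ι₂ → X)
    (a b : ι₂ → ℝ) :
    qf k (Sum.elim xs1 xs2) (Sum.elim 0 a) (Sum.elim 0 b) = qf k xs2 a b := by
  simp [qf, Fintype.sum_sum_type]

lemma qf_elim_cross {ι₁ ι₂ : Type*} [Fintype ι₁] [Fintype ι₂] (xs1 : ι₁ → X) (xs2 : ι₂ → X)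
    (a : ι₁ → ℝ) (b : ι₂ → ℝ) :
    qf k (Sum.elim xs1 xs2) (Sum.elim a 0) (Sum.elim 0 b)
      = ∑ i, ∑ j, a i * b j * k (xs1 i) (xs2 j) := by
  simp [qf, Fintype.sum_sum_type]

/-- Interpolation inequality: `|f y - μ(y)| ≤ B σ(y)`. -/
lemma interp_bound (hsym : ∀ x y : X, k x y = k y x)
    (hpsd : ∀ (n : ℕ) (xv : Fin n → X) (c : Fin n → ℝ),
      0 ≤ ∑ i, ∑ j, c i * c j * k (xv i) (xv j))
    {n : ℕ} (c : Fin n → ℝ) (xv : Fin n → X)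
    (f : X → ℝ) (hf : ∀ x, f x = ∑ i, c i * k (xv i) x) (B : ℝ) (hB : 0 ≤ B)
    (hqc : qf k xv c c ≤ B ^ 2)
    {t : ℕ} (z : Fin t → X) (hK : gram k z * (gram k z)⁻¹ = 1) (y : X) :
    |f y - postMean k z f y| ≤ B * postStdInv k z y := by
  classical
  set G := gram k z with hG
  set kv := kvec k z y with hkv
  set w : Fin t → ℝ := G⁻¹ *ᵥ kv with hw
  have hGw : G *ᵥ w = kv := by
    rw [hw, Matrix.mulVec_mulVec, hK, Matrix.one_mulVec]
  set err : ℝ := k y y - kv ⬝ᵥ w with herr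
  have hmean : postMean k z f y = w ⬝ᵥ (fun l => f (z l)) := by
    rw [postMean, Matrix.dotProduct_mulVec, ← Matrix.mulVec_transpose,
      Matrix.transpose_nonsing_inv, gram_transpose hsym]
  set F : Fin n ⊕ (Fin t ⊕ Unit) → X := Sum.elim xv (Sum.elim z fun _ => y) with hF
  set u : Fin n ⊕ (Fin t ⊕ Unit) → ℝ := Sum.elim c 0 with hu
  set v : Fin n ⊕ (Fin t ⊕ Unit) → ℝ :=
    Sum.elim 0 (Sum.elim (fun l => - w l) fun _ => 1) with hv
  have huu : qf k F u u = qf k xv c c := qf_elim_left _ _ _ _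
  have hvv : qf k F v v = err := by
    rw [hv, qf_elim_right, qf_elim_eq hsym]
    have h1 : (fun l => - w l) ⬝ᵥ (G *ᵥ fun l => - w l) = w ⬝ᵥ (G *ᵥ w) := by
      have hne : (fun l => - w l) = -w := rfl
      rw [hne, Matrix.mulVec_neg, neg_dotProduct, dotProduct_neg, neg_neg]
    have h2 : (fun l => - w l) ⬝ᵥ kv = -(w ⬝ᵥ kv) := by
      have hne : (fun l => - w l) = -w := rfl
      rw [hne, neg_dotProduct]
    have h3 : w ⬝ᵥ (G *ᵥ w) = kv ⬝ᵥ w := by rw [hGw]; exact dotProduct_comm _ _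
    have h4 : w ⬝ᵥ kv = kv ⬝ᵥ w := dotProduct_comm _ _
    rw [h1, h2, h3, h4, herr]
    ring
  have huv : qf k F u v = f y - postMean k z f y := by
    rw [hu, hv, qf_elim_cross]
    simp only [Fintype.sum_sum_type, Sum.elim_inl, Sum.elim_inr, Finset.univ_unique,
      Finset.sum_singleton]
    have hswap : ∑ i, (∑ l, c i * (- w l) * k (xv i) (z l))
        = ∑ l, - (w l * f (z l)) := by
      rw [Finset.sum_comm]
      refine Finset.sum_congr rfl fun l _ => ?_
      rw [hf (z l), Finset.mul_sum, ← Finset.sum_neg_distrib]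
      refine Finset.sum_congr rfl fun i _ => by ring
    have hfy : ∑ i, c i * (1:ℝ) * k (xv i) y = f y := by
      rw [hf y]; exact Finset.sum_congr rfl fun i _ => by ring
    rw [Finset.sum_add_distrib, hswap, hfy, hmean]
    have h5 : (w ⬝ᵥ fun l => f (z l)) = ∑ l, w l * f (z l) := rfl
    rw [h5, Finset.sum_neg_distrib]
    ring
  have herr0 : 0 ≤ err := by
    rw [herr, hkv, hw]; exact err_nonneg hsym hpsd z y hK
  have hcs := qf_sq_le hsym hpsd F u v
  rw [huu, hvv, huv] at hcs
  have hcs2 : (f y - postMean k z f y) ^ 2 ≤ B ^ 2 * err := by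
    calc (f y - postMean k z f y) ^ 2 ≤ qf k xv c c * err := hcs
    _ ≤ B ^ 2 * err := mul_le_mul_of_nonneg_right hqc herr0
  have hstd : postStdInv k z y = Real.sqrt err := rfl
  calc |f y - postMean k z f y| = Real.sqrt ((f y - postMean k z f y) ^ 2) :=
        (Real.sqrt_sq_eq_abs _).symm
  _ ≤ Real.sqrt (B ^ 2 * err) := Real.sqrt_le_sqrt hcs2
  _ = B * Real.sqrt err := by
      rw [Real.sqrt_mul (sq_nonneg B), Real.sqrt_sq hB]
  _ = B * postStdInv k z y := by rw [hstd]

/-- `|f y| ≤ B` when `‖f‖ ≤ B` and `k x x ≤ 1`. -/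
lemma f_abs_le (hsym : ∀ x y : X, k x y = k y x)
    (hpsd : ∀ (n : ℕ) (xv : Fin n → X) (c : Fin n → ℝ),
      0 ≤ ∑ i, ∑ j, c i * c j * k (xv i) (xv j))
    (hk1 : ∀ x : X, k x x ≤ 1)
    {n : ℕ} (c : Fin n → ℝ) (xv : Fin n → X)
    (f : X → ℝ) (hf : ∀ x, f x = ∑ i, c i * k (xv i) x) (B : ℝ) (hB : 0 ≤ B)
    (hqc : qf k xv c c ≤ B ^ 2) (y : X) : |f y| ≤ B := by
  classical
  set F : Fin n ⊕ Unit → X := Sum.elim xv fun _ => y with hF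
  set u : Fin n ⊕ Unit → ℝ := Sum.elim c 0 with hu
  set v : Fin n ⊕ Unit → ℝ := Sum.elim 0 fun _ => 1 with hv
  have huu : qf k F u u = qf k xv c c := qf_elim_left _ _ _ _
  have hvv : qf k F v v = k y y := by
    rw [hv, qf_elim_right]
    simp [qf]
  have huv : qf k F u v = f y := by
    rw [hu, hv, qf_elim_cross]
    simp only [Finset.univ_unique, Finset.sum_singleton]
    rw [hf y]
    exact Finset.sum_congr rfl fun i _ => by ring
  have hky : 0 ≤ k y y := by
    have h := qf_nonneg hpsd (fun _ : Unit => y) (fun _ => (1:ℝ))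
    simpa [qf] using h
  have hcs := qf_sq_le hsym hpsd F u v
  rw [huu, hvv, huv] at hcs
  have h2 : (f y) ^ 2 ≤ B ^ 2 := by
    calc (f y) ^ 2 ≤ qf k xv c c * k y y := hcs
    _ ≤ B ^ 2 * 1 := by
        apply mul_le_mul hqc (hk1 y) hky (sq_nonneg B)
    _ = B ^ 2 := mul_one _
  calc |f y| = Real.sqrt ((f y) ^ 2) := (Real.sqrt_sq_eq_abs _).symm
  _ ≤ Real.sqrt (B ^ 2) := Real.sqrt_le_sqrt h2
  _ = B := Real.sqrt_sq hB


/-- The regularized matrix `λ² I + K` is positive definite. -/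
lemma reg_posdef (hsym : ∀ x y : X, k x y = k y x)
    (hpsd : ∀ (n : ℕ) (xv : Fin n → X) (c : Fin n → ℝ),
      0 ≤ ∑ i, ∑ j, c i * c j * k (xv i) (xv j))
    {t : ℕ} (z : Fin t → X) {lam : ℝ} (hlam : 0 < lam) :
    (lam ^ 2 • (1 : Matrix (Fin t) (Fin t) ℝ) + gram k z).PosDef := by
  classical
  refine Matrix.PosDef.of_dotProduct_mulVec_pos ?_ ?_
  · show _ᴴ = _
    ext i j
    simp only [Matrix.conjTranspose_apply, Matrix.add_apply, Matrix.smul_apply,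
      Matrix.one_apply, _root_.gram, star_trivial, smul_eq_mul]
    by_cases h : i = j
    · subst h; simp
    · have h' : ¬ j = i := fun hh => h hh.symm
      simp [h, h', hsym (z j) (z i)]
  · intro x hx
    have h0 : (0:ℝ) ≤ x ⬝ᵥ x := Finset.sum_nonneg fun i _ => mul_self_nonneg (x i)
    have hne : x ⬝ᵥ x ≠ 0 := fun h => hx (dotProduct_self_eq_zero.mp h)
    have hxx : 0 < x ⬝ᵥ x := lt_of_le_of_ne h0 (Ne.symm hne)
    have hstar : star x = x := funext fun i => star_trivial _
    rw [hstar, Matrix.add_mulVec, dotProduct_add, Matrix.smul_mulVec,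
      Matrix.one_mulVec, dotProduct_smul, qf_dot]
    have hq := qf_nonneg hpsd z x
    have : (0:ℝ) < lam ^ 2 * (x ⬝ᵥ x) := by positivity
    rw [smul_eq_mul]
    linarith

/-- Chain lower bound for the regularized determinant. -/
lemma chain_det (hsym : ∀ x y : X, k x y = k y x)
    (hpsd : ∀ (n : ℕ) (xv : Fin n → X) (c : Fin n → ℝ),
      0 ≤ ∑ i, ∑ j, c i * c j * k (xv i) (xv j)) :
    ∀ (m : ℕ) (p : Fin m → X) (lam : ℝ), 0 < lam →
    (∀ (i : Fin m) (cc : Fin i.1 → ℝ),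
      2 * lam ^ 2 ≤ k (p i) (p i)
        - 2 * (cc ⬝ᵥ kvec k (fun j : Fin i.1 => p ⟨j.1, lt_trans j.2 i.2⟩) (p i))
        + cc ⬝ᵥ (gram k (fun j : Fin i.1 => p ⟨j.1, lt_trans j.2 i.2⟩) *ᵥ cc)) →
    (3 * lam ^ 2) ^ m ≤ (lam ^ 2 • (1 : Matrix (Fin m) (Fin m) ℝ) + gram k p).det := by
  classical
  intro m
  induction m with
  | zero =>
    intro p lam hlam _
    rw [Matrix.det_fin_zero]
    norm_num
  | succ m ih =>
    intro p lam hlam hw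
    set A := lam ^ 2 • (1 : Matrix (Fin m) (Fin m) ℝ) + gram k (fun j : Fin m => p j.castSucc)
      with hA
    have hApos : A.PosDef := reg_posdef hsym hpsd _ hlam
    have hAdet : IsUnit A.det := isUnit_iff_ne_zero.mpr (ne_of_gt hApos.det_pos)
    have hAinv : Invertible A := A.invertibleOfIsUnitDet hAdet
    set kv : Fin m → ℝ := fun j => k (p j.castSucc) (p (Fin.last m)) with hkv
    set Bm : Matrix (Fin m) (Fin 1) ℝ := fun i _ => k (p i.castSucc) (p (Fin.last m)) with hBm
    set Cm : Matrix (Fin 1) (Fin m) ℝ := fun _ j => k (p (Fin.last m)) (p j.castSucc) with hCm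
    set Dm : Matrix (Fin 1) (Fin 1) ℝ :=
      fun _ _ => lam ^ 2 + k (p (Fin.last m)) (p (Fin.last m)) with hDm
    set M := lam ^ 2 • (1 : Matrix (Fin (m+1)) (Fin (m+1)) ℝ) + gram k p with hM
    have hsub : M.submatrix (finSumFinEquiv (m := m) (n := 1))
        (finSumFinEquiv (m := m) (n := 1)) = Matrix.fromBlocks A Bm Cm Dm := by
      ext i j
      cases i with
      | inl i =>
        cases j with
        | inl j =>
          simp only [Matrix.submatrix_apply, Matrix.fromBlocks_apply₁₁, hM, hA,
            Matrix.add_apply, Matrix.smul_apply, Matrix.one_apply, _root_.gram, smul_eq_mul]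
          have : (finSumFinEquiv (Sum.inl i) : Fin (m+1)) = i.castSucc := rfl
          rw [this]
          have h2 : (finSumFinEquiv (Sum.inl j) : Fin (m+1)) = j.castSucc := rfl
          rw [h2]
          congr 1
          · congr 1
            simp [Fin.castSucc_inj]
        | inr j =>
          have h1 : (finSumFinEquiv (Sum.inl i) : Fin (m+1)) = i.castSucc := rfl
          have h2 : (finSumFinEquiv (Sum.inr j) : Fin (m+1)) = Fin.last m := by
            apply Fin.ext
            simp [finSumFinEquiv, Fin.natAdd, Fin.last]
          simp only [Matrix.submatrix_apply, Matrix.fromBlocks_apply₁₂, hM, hBm,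
            Matrix.add_apply, Matrix.smul_apply, Matrix.one_apply, _root_.gram, smul_eq_mul, h1, h2]
          have : ¬ (i.castSucc = Fin.last m) := by
            intro h; exact absurd (congrArg Fin.val h) (by simp [Fin.last]; omega)
          simp [this]
          rfl
      | inr i =>
        cases j with
        | inl j =>
          have h1 : (finSumFinEquiv (Sum.inr i) : Fin (m+1)) = Fin.last m := by
            apply Fin.ext
            simp [finSumFinEquiv, Fin.natAdd, Fin.last]
          have h2 : (finSumFinEquiv (Sum.inl j) : Fin (m+1)) = j.castSucc := rfl
          simp only [Matrix.submatrix_apply, Matrix.fromBlocks_apply₂₁, hM, hCm,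
            Matrix.add_apply, Matrix.smul_apply, Matrix.one_apply, _root_.gram, smul_eq_mul, h1, h2]
          have : ¬ (Fin.last m = j.castSucc) := by
            intro h; exact absurd (congrArg Fin.val h) (by simp [Fin.last]; omega)
          simp [this]
          rfl
        | inr j =>
          have h1 : (finSumFinEquiv (Sum.inr i) : Fin (m+1)) = Fin.last m := by
            apply Fin.ext
            simp [finSumFinEquiv, Fin.natAdd, Fin.last]
          have h2 : (finSumFinEquiv (Sum.inr j) : Fin (m+1)) = Fin.last m := by
            apply Fin.ext
            simp [finSumFinEquiv, Fin.natAdd, Fin.last]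
          simp only [Matrix.submatrix_apply, Matrix.fromBlocks_apply₂₂, hM, hDm,
            Matrix.add_apply, Matrix.smul_apply, Matrix.one_apply, _root_.gram, smul_eq_mul, h1, h2]
          simp
          rfl
    have hdet : M.det = A.det * (Dm - Cm * A⁻¹ * Bm).det := by
      rw [← Matrix.det_submatrix_equiv_self (finSumFinEquiv (m := m) (n := 1)) M, hsub]
      rw [Matrix.det_fromBlocks₁₁]
      congr 2
      rw [Matrix.invOf_eq_nonsing_inv]
    have hentry : (Dm - Cm * A⁻¹ * Bm).det
        = lam ^ 2 + k (p (Fin.last m)) (p (Fin.last m)) - kv ⬝ᵥ (A⁻¹ *ᵥ kv) := by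
      rw [Matrix.det_fin_one]
      rw [Matrix.sub_apply]; simp only [hDm]
      have hCAB : (Cm * A⁻¹ * Bm) 0 0 = kv ⬝ᵥ (A⁻¹ *ᵥ kv) := by
        simp only [Matrix.mul_apply, Matrix.mulVec, dotProduct]
        simp only [hCm, hBm, hkv]
        simp only [Finset.sum_mul, Finset.mul_sum]
        rw [Finset.sum_comm]
        refine Finset.sum_congr rfl fun l _ => Finset.sum_congr rfl fun j _ => ?_
        rw [hsym (p (Fin.last m)) (p l.castSucc)]
        ring
      rw [hCAB]

    set cst : Fin m → ℝ := A⁻¹ *ᵥ kv with hcst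
    have hAc : A *ᵥ cst = kv := by
      rw [hcst, Matrix.mulVec_mulVec, Matrix.mul_nonsing_inv _ hAdet, Matrix.one_mulVec]
    have hq : k (p (Fin.last m)) (p (Fin.last m)) - kv ⬝ᵥ cst
        = k (p (Fin.last m)) (p (Fin.last m)) - 2 * (cst ⬝ᵥ kv) + cst ⬝ᵥ (A *ᵥ cst) := by
      rw [hAc, dotProduct_comm cst kv]
      ring
    have hsplit2 : cst ⬝ᵥ (A *ᵥ cst)
        = lam ^ 2 * (cst ⬝ᵥ cst)
          + cst ⬝ᵥ (gram k (fun j : Fin m => p j.castSucc) *ᵥ cst) := by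
      rw [hA, Matrix.add_mulVec, dotProduct_add, Matrix.smul_mulVec,
        Matrix.one_mulVec, dotProduct_smul, smul_eq_mul]
    have hwlast : 2 * lam ^ 2 ≤ k (p (Fin.last m)) (p (Fin.last m)) - 2 * (cst ⬝ᵥ kv)
        + cst ⬝ᵥ (gram k (fun j : Fin m => p j.castSucc) *ᵥ cst) := hw (Fin.last m) cst
    have hcc : (0:ℝ) ≤ cst ⬝ᵥ cst := Finset.sum_nonneg fun i _ => mul_self_nonneg (cst i)
    have hentry2 : 3 * lam ^ 2 ≤ lam ^ 2 + k (p (Fin.last m)) (p (Fin.last m)) - kv ⬝ᵥ cst := by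
      have := hq
      nlinarith [hwlast, hcc, hsplit2]
    have hIH : (3 * lam ^ 2) ^ m ≤ A.det := by
      apply ih (fun j : Fin m => p j.castSucc) lam hlam
      intro i cc
      exact hw i.castSucc cc
    have h3pos : (0:ℝ) ≤ 3 * lam ^ 2 := by positivity
    calc (3 * lam ^ 2) ^ (m + 1) = (3 * lam ^ 2) ^ m * (3 * lam ^ 2) := by ring
    _ ≤ A.det * (Dm - Cm * A⁻¹ * Bm).det := by
        apply mul_le_mul hIH _ h3pos (le_trans (pow_nonneg h3pos m) hIH)
        rw [hentry]
        exact hentry2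
    _ = M.det := hdet.symm

/-- Lower bound on the log-determinant of the normalized regularized Gram matrix. -/
lemma logdet_lower (hsym : ∀ x y : X, k x y = k y x)
    (hpsd : ∀ (n : ℕ) (xv : Fin n → X) (c : Fin n → ℝ),
      0 ≤ ∑ i, ∑ j, c i * c j * k (xv i) (xv j))
    (m : ℕ) (p : Fin m → X) (lam : ℝ) (hlam : 0 < lam)
    (hw : ∀ (i : Fin m) (cc : Fin i.1 → ℝ),
      2 * lam ^ 2 ≤ k (p i) (p i)
        - 2 * (cc ⬝ᵥ kvec k (fun j : Fin i.1 => p ⟨j.1, lt_trans j.2 i.2⟩) (p i))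
        + cc ⬝ᵥ (gram k (fun j : Fin i.1 => p ⟨j.1, lt_trans j.2 i.2⟩) *ᵥ cc)) :
    (m : ℝ) * Real.log 3 ≤ Real.log ((1 + (lam ^ 2)⁻¹ • gram k p).det) := by
  have hlam2 : (0:ℝ) < lam ^ 2 := by positivity
  have h1 : (1 : Matrix (Fin m) (Fin m) ℝ) + (lam ^ 2)⁻¹ • gram k p
      = (lam ^ 2)⁻¹ • (lam ^ 2 • (1 : Matrix (Fin m) (Fin m) ℝ) + gram k p) := by
    rw [smul_add, smul_smul, inv_mul_cancel₀ (ne_of_gt hlam2), one_smul]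
  rw [h1, Matrix.det_smul]
  have hchain := chain_det hsym hpsd m p lam hlam hw
  have h2 : (3:ℝ) ^ m ≤ ((lam ^ 2)⁻¹) ^ (Fintype.card (Fin m))
      * (lam ^ 2 • (1 : Matrix (Fin m) (Fin m) ℝ) + gram k p).det := by
    rw [Fintype.card_fin]
    calc (3:ℝ) ^ m = ((lam ^ 2)⁻¹) ^ m * (3 * lam ^ 2) ^ m := by
          rw [← mul_pow]
          congr 1
          field_simp
    _ ≤ _ := mul_le_mul_of_nonneg_left hchain (by positivity)
  calc (m:ℝ) * Real.log 3 = Real.log ((3:ℝ) ^ m) := by rw [Real.log_pow]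
  _ ≤ _ := Real.log_le_log (by positivity) h2


end RegretHelpers

/-- Rearrangement bound: if fewer than `m` elements exceed `c m` for each `m ≥ 1`,
with `c` antitone (on `[1,∞)`), then the sum is at most `∑_{i<card} c (i+1)`. -/
lemma sum_le_of_counts :
    ∀ (N : ℕ) (s : Finset ℕ) (_ : s.card = N) (v : ℕ → ℝ) (c : ℕ → ℝ),
      (∀ t ∈ s, 0 ≤ v t) →
      (∀ a b : ℕ, 1 ≤ a → a ≤ b → c b ≤ c a) →
      (∀ m : ℕ, 1 ≤ m → ((s.filter (fun t => c m < v t)).card < m)) →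
      ∑ t ∈ s, v t ≤ ∑ i ∈ Finset.range N, c (i + 1) := by
  intro N
  induction N with
  | zero =>
    intro s hcard v c _ _ _
    rw [Finset.card_eq_zero.mp hcard]
    simp
  | succ n ih =>
    intro s hcard v c hv hc hcount
    have hne : s.Nonempty := Finset.card_pos.mp (by omega)
    obtain ⟨t0, ht0s, ht0max⟩ := Finset.exists_max_image s v hne
    have h1 : v t0 ≤ c 1 := by
      by_contra hcon
      push_neg at hcon
      have : t0 ∈ s.filter (fun t => c 1 < v t) := Finset.mem_filter.mpr ⟨ht0s, hcon⟩
      have := Finset.card_pos.mpr ⟨t0, this⟩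
      have := hcount 1 le_rfl
      omega
    set s' := s.erase t0 with hs'
    have hcard' : s'.card = n := by
      rw [hs', Finset.card_erase_of_mem ht0s, hcard]
      omega
    have hsum : ∑ t ∈ s, v t = v t0 + ∑ t ∈ s', v t := by
      rw [hs', ← Finset.add_sum_erase s v ht0s]
    have hv' : ∀ t ∈ s', 0 ≤ v t := fun t ht => hv t (Finset.mem_of_mem_erase ht)
    have hc' : ∀ a b : ℕ, 1 ≤ a → a ≤ b → (fun m => c (m + 1)) b ≤ (fun m => c (m + 1)) a :=
      fun a b ha hab => hc (a + 1) (b + 1) (by omega) (by omega)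
    have hcount' : ∀ m : ℕ, 1 ≤ m →
        ((s'.filter (fun t => (fun m => c (m + 1)) m < v t)).card < m) := by
      intro m hm
      by_cases hcase : c (m + 1) < v t0
      · have hsub : s'.filter (fun t => c (m + 1) < v t)
            = (s.filter (fun t => c (m + 1) < v t)).erase t0 := by
          rw [hs', Finset.filter_erase]
        have hmem : t0 ∈ s.filter (fun t => c (m + 1) < v t) :=
          Finset.mem_filter.mpr ⟨ht0s, hcase⟩
        have := hcount (m + 1) (by omega)
        have := Finset.card_erase_of_mem hmem
        simp only [hsub]
        omega
      · push_neg at hcase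
        have : s'.filter (fun t => c (m + 1) < v t) = ∅ := by
          apply Finset.filter_false_of_mem
          intro t ht
          have := ht0max t (Finset.mem_of_mem_erase ht)
          push_neg
          linarith
        simp only [this, Finset.card_empty]
        omega
    have hih := ih s' hcard' v (fun m => c (m + 1)) hv' hc' hcount'
    rw [hsum, Finset.sum_range_succ' (fun i => c (i + 1)) n]
    have : ∑ i ∈ Finset.range n, c (i + 1 + 1) = ∑ i ∈ Finset.range n, (fun m => c (m + 1)) (i + 1) := rfl
    linarith [hih]

/-- Bernoulli-type inequality for exponents in `(0,1]`. -/
lemma bernoulli01 {x q : ℝ} (hx0 : 0 ≤ x) (hx1 : x ≤ 1) (hq0 : 0 < q) (hq1 : q ≤ 1) :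
    (1 - x) ^ q ≤ 1 - q * x := by
  set u := (1 - x) ^ q with hu
  have hu0 : 0 ≤ u := Real.rpow_nonneg (by linarith) q
  have hber := one_add_mul_self_le_rpow_one_add (s := u - 1) (by linarith)
    (p := 1 / q) (one_le_one_div hq0 hq1)
  have hupow : (1 + (u - 1)) ^ (1 / q : ℝ) = 1 - x := by
    have h1 : (1 : ℝ) + (u - 1) = u := by ring
    rw [h1, hu, ← Real.rpow_mul (by linarith : (0:ℝ) ≤ 1 - x), mul_one_div,
      div_self (ne_of_gt hq0), Real.rpow_one]
  rw [hupow] at hber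
  have hmul := mul_le_mul_of_nonneg_left hber (le_of_lt hq0)
  have hq' : q * (1 / q) = 1 := by field_simp
  nlinarith [hmul, hq']

/-- Sum of `(i+1)^{-p}` bounded by `T^{1-p}/(1-p)` for `p ∈ (0,1)`. -/
lemma sum_rpow_le {p : ℝ} (hp0 : 0 < p) (hp1 : p < 1) (T : ℕ) :
    ∑ i ∈ Finset.range T, ((i : ℝ) + 1) ^ (-p) ≤ (T : ℝ) ^ (1 - p) / (1 - p) := by
  induction T with
  | zero => simp [Real.zero_rpow (by linarith : (1:ℝ) - p ≠ 0)]
  | succ n ihn =>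
    rw [Finset.sum_range_succ]
    have ha : (0:ℝ) < (n:ℝ) + 1 := by positivity
    have hq : (0:ℝ) < 1 - p := by linarith
    have hkey : ((n:ℝ)) ^ (1 - p) ≤ ((n:ℝ) + 1) ^ (1 - p) - (1 - p) * ((n:ℝ) + 1) ^ (-p) := by
      have hx0 : (0:ℝ) ≤ 1 / ((n:ℝ) + 1) := by positivity
      have hx1 : 1 / ((n:ℝ) + 1) ≤ 1 := by
        rw [div_le_one ha]; linarith [Nat.cast_nonneg (α := ℝ) n]
      have hber := bernoulli01 hx0 hx1 (by linarith : (0:ℝ) < 1 - p) (by linarith)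
      have hn : (n:ℝ) = ((n:ℝ) + 1) * (1 - 1 / ((n:ℝ) + 1)) := by
        rw [mul_sub, mul_one, mul_one_div_cancel (ne_of_gt ha)]; ring
      calc ((n:ℝ)) ^ (1 - p) = (((n:ℝ) + 1) * (1 - 1 / ((n:ℝ) + 1))) ^ (1 - p) := by rw [← hn]
      _ = ((n:ℝ) + 1) ^ (1 - p) * (1 - 1 / ((n:ℝ) + 1)) ^ (1 - p) := by
          rw [Real.mul_rpow (by positivity) (by linarith)]
      _ ≤ ((n:ℝ) + 1) ^ (1 - p) * (1 - (1 - p) * (1 / ((n:ℝ) + 1))) := by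
          apply mul_le_mul_of_nonneg_left hber (Real.rpow_nonneg (by positivity) _)
      _ = ((n:ℝ) + 1) ^ (1 - p) - (1 - p) * (((n:ℝ) + 1) ^ (1 - p) / ((n:ℝ) + 1)) := by
          ring
      _ = ((n:ℝ) + 1) ^ (1 - p) - (1 - p) * ((n:ℝ) + 1) ^ (-p) := by
          have hdiv : ((n:ℝ) + 1) ^ (-p) = ((n:ℝ) + 1) ^ (1 - p) / ((n:ℝ) + 1) := by
            rw [show (-p) = (1 - p) - 1 by ring, Real.rpow_sub ha, Real.rpow_one]
          rw [hdiv]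
    have h3 : ((n:ℝ)) ^ (1 - p) + (1 - p) * (((n:ℝ) + 1) ^ (-p)) ≤ ((n:ℝ) + 1) ^ (1 - p) := by
      linarith [hkey]
    have h2 : ((n:ℝ)) ^ (1 - p) / (1 - p) + ((n:ℝ) + 1) ^ (-p) ≤ ((n:ℝ) + 1) ^ (1 - p) / (1 - p) := by
      have h5 : ((n:ℝ) + 1) ^ (-p) = ((1 - p) * (((n:ℝ) + 1) ^ (-p))) / (1 - p) := by
        field_simp
      rw [h5, ← add_div]
      exact (div_le_div_iff_of_pos_right hq).mpr h3
    push_cast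
    linarith [ihn, h2]


lemma numeric_contra (dR ν CMat Ctil m L lam2 : ℝ)
    (hd0 : 0 < dR) (hν : 0 < ν) (hCMat : 0 < CMat) (hCtil1 : 1 ≤ Ctil)
    (hZ : (2 + 2 * ν / dR) ^ (2 * ν / dR) * (6 * CMat) ^ (1 + 2 * ν / dR) ≤ Ctil)
    (hm4 : (4:ℝ) ≤ m) (hLdef : L = Real.log m) (hL1 : 1 ≤ L)
    (hlam2 : lam2 = Ctil * m ^ (-(2 * ν / dR)) * L ^ (2 * ν / dR) / 2)
    (hwsq1 : Ctil * m ^ (-(2 * ν / dR)) * L ^ (2 * ν / dR) ≤ 1) :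
    CMat * (m / lam2) ^ (dR / (2 * ν + dR)) * Real.log (m / lam2) ^ (2 * ν / (2 * ν + dR))
      < 1 / 2 * (m * Real.log 3) := by
  set r : ℝ := 2 * ν / dR with hrdef
  set α : ℝ := dR / (2 * ν + dR) with hadef
  set β : ℝ := 2 * ν / (2 * ν + dR) with hbdef
  have h2νd : 0 < 2 * ν + dR := by linarith
  have hr0 : 0 < r := by rw [hrdef]; positivity
  have ha0 : 0 < α := by rw [hadef]; positivity
  have ha1 : α ≤ 1 := by rw [hadef, div_le_one h2νd]; linarith
  have hb0 : 0 < β := by rw [hbdef]; positivity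
  have hm0 : (0:ℝ) < m := by linarith
  have hL0 : (0:ℝ) < L := by linarith
  have hCtil0 : (0:ℝ) < Ctil := by linarith
  have hmr0 : (0:ℝ) < m ^ r := Real.rpow_pos_of_pos hm0 r
  have hLr0 : (0:ℝ) < L ^ r := Real.rpow_pos_of_pos hL0 r
  have hwpos : (0:ℝ) < Ctil * m ^ (-r) * L ^ r := by
    have : (0:ℝ) < m ^ (-r) := Real.rpow_pos_of_pos hm0 _
    positivity
  have hlam2pos : 0 < lam2 := by rw [hlam2]; linarith
  have hiden1 : ((1:ℝ) + r) * α = 1 := by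
    rw [hrdef, hadef]
    field_simp
    ring
  have hiden2 : r * α = β := by
    rw [hrdef, hadef, hbdef]
    field_simp
  have hP : m ^ ((1:ℝ) + r) = m * m ^ r := by rw [Real.rpow_add hm0, Real.rpow_one]
  have hXeq : m / lam2 = 2 * m ^ ((1:ℝ) + r) / (Ctil * L ^ r) := by
    rw [hlam2, Real.rpow_neg (le_of_lt hm0), hP]
    rw [div_div_eq_mul_div]
    field_simp
  have hX2m : 2 * m ≤ m / lam2 := by
    rw [hlam2, div_div_eq_mul_div, le_div_iff₀ hwpos]
    nlinarith [hwsq1, hm0]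
  have hX1 : (1:ℝ) ≤ m / lam2 := by linarith
  have hXpos : (0:ℝ) < m / lam2 := by linarith
  have hlogX0 : 0 ≤ Real.log (m / lam2) := Real.log_nonneg hX1
  have hlogXle : Real.log (m / lam2) ≤ (2 + r) * L := by
    rw [hXeq, Real.log_div (by positivity) (by positivity),
      Real.log_mul (by norm_num) (by positivity),
      Real.log_mul (by positivity) (by positivity),
      Real.log_rpow hm0, Real.log_rpow hL0]
    have hlog2 : Real.log 2 ≤ 1 := le_of_lt (lt_trans Real.log_two_lt_d9 (by norm_num))
    have hlogCtil : 0 ≤ Real.log Ctil := Real.log_nonneg hCtil1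
    have hlogL : 0 ≤ Real.log L := Real.log_nonneg hL1
    rw [← hLdef]
    nlinarith [mul_nonneg (le_of_lt hr0) hlogL, hL1]
  have hXa : (m / lam2) ^ α = 2 ^ α * m / (Ctil ^ α * L ^ β) := by
    rw [hXeq, Real.div_rpow (by positivity) (by positivity),
      Real.mul_rpow (by norm_num) (by positivity),
      Real.mul_rpow (by positivity) (by positivity),
      ← Real.rpow_mul (le_of_lt hm0), ← Real.rpow_mul (le_of_lt hL0),
      hiden1, hiden2, Real.rpow_one]
  have hYb : Real.log (m / lam2) ^ β ≤ (2 + r) ^ β * L ^ β := by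
    rw [← Real.mul_rpow (by positivity) (by linarith)]
    exact Real.rpow_le_rpow hlogX0 hlogXle (le_of_lt hb0)
  have hLb0 : (0:ℝ) < L ^ β := Real.rpow_pos_of_pos hL0 β
  have hCta0 : (0:ℝ) < Ctil ^ α := Real.rpow_pos_of_pos hCtil0 α
  have hRle : CMat * (m / lam2) ^ α * Real.log (m / lam2) ^ β
      ≤ CMat * (2 ^ α * m / (Ctil ^ α * L ^ β)) * ((2 + r) ^ β * L ^ β) := by
    rw [hXa]
    apply mul_le_mul_of_nonneg_left hYb
    have h2a0 : (0:ℝ) < (2:ℝ) ^ α := Real.rpow_pos_of_pos (by norm_num) α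
    positivity
  have hsimp : CMat * (2 ^ α * m / (Ctil ^ α * L ^ β)) * ((2 + r) ^ β * L ^ β)
      = CMat * 2 ^ α * (2 + r) ^ β * m / Ctil ^ α := by
    field_simp
  have hCt : (2 + r) ^ β * (6 * CMat) ≤ Ctil ^ α := by
    have hZα := Real.rpow_le_rpow (by positivity) hZ (le_of_lt ha0)
    rw [Real.mul_rpow (by positivity) (by positivity),
      ← Real.rpow_mul (by positivity), ← Real.rpow_mul (by positivity),
      hiden2, hiden1, Real.rpow_one] at hZα
    exact hZα
  have h2a : (2:ℝ) ^ α ≤ 2 := by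
    calc (2:ℝ) ^ α ≤ (2:ℝ) ^ (1:ℝ) := Real.rpow_le_rpow_of_exponent_le (by norm_num) ha1
    _ = 2 := Real.rpow_one 2
  have hden : (0:ℝ) < (2 + r) ^ β * (6 * CMat) := by
    have : (0:ℝ) < (2 + r) ^ β := Real.rpow_pos_of_pos (by linarith) β
    positivity
  have hfin : CMat * 2 ^ α * (2 + r) ^ β * m / Ctil ^ α ≤ m / 3 := by
    have hnum0 : (0:ℝ) ≤ CMat * 2 ^ α * (2 + r) ^ β * m := by
      have h2a0 : (0:ℝ) ≤ (2:ℝ) ^ α := le_of_lt (Real.rpow_pos_of_pos (by norm_num) α)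
      have hrb0 : (0:ℝ) ≤ (2 + r) ^ β := le_of_lt (Real.rpow_pos_of_pos (by linarith) β)
      positivity
    calc CMat * 2 ^ α * (2 + r) ^ β * m / Ctil ^ α
        ≤ CMat * 2 ^ α * (2 + r) ^ β * m / ((2 + r) ^ β * (6 * CMat)) := by
          exact div_le_div_of_nonneg_left hnum0 hden hCt
    _ = 2 ^ α * m / 6 := by
        have hb' : ((2:ℝ) + r) ^ β ≠ 0 := ne_of_gt (Real.rpow_pos_of_pos (by linarith) β)
        have hC' : CMat ≠ 0 := ne_of_gt hCMat
        rw [div_eq_div_iff (by positivity) (by norm_num : (6:ℝ) ≠ 0)]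
        ring
    _ ≤ m / 3 := by nlinarith [h2a, hm4]
  have hlog3 : 1 ≤ Real.log 3 := by
    rw [Real.le_log_iff_exp_le (by norm_num)]
    have := Real.exp_one_lt_d9
    linarith
  calc CMat * (m / lam2) ^ α * Real.log (m / lam2) ^ β
      ≤ CMat * 2 ^ α * (2 + r) ^ β * m / Ctil ^ α := le_of_le_of_eq hRle hsimp
  _ ≤ m / 3 := hfin
  _ < 1 / 2 * (m * Real.log 3) := by nlinarith [hlog3, hm4]


/-- Cumulative regret for GP-UCB under a Matérn-type information-gain bound,
case d > ν. -/
theorem gp_ucb_regret_matern_d_gt_nu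
{X : Type*} [Nonempty X] (k : X → X → ℝ)
    (hsym : ∀ x y : X, k x y = k y x)
    (hpsd : ∀ (n : ℕ) (xv : Fin n → X) (c : Fin n → ℝ),
      0 ≤ ∑ i, ∑ j, c i * c j * k (xv i) (xv j))
    (hk1 : ∀ x : X, k x x ≤ 1)
    (CMat lamBar : ℝ) (hCMat : 0 < CMat) (hlamBar : 0 < lamBar)
    (T0 : ℕ) (hT0 : 2 ≤ T0) (d : ℕ) (hd : 1 ≤ d) (ν : ℝ) (hν : 0 < ν)
    (hgain : ∀ lam : ℝ, 0 < lam → lam ≤ lamBar → ∀ t : ℕ, T0 ≤ t →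
      mig k t lam ≤ ENNReal.ofReal
        (CMat * ((t : ℝ) / lam ^ 2) ^ ((d : ℝ) / (2 * ν + (d : ℝ))) *
          Real.log ((t : ℝ) / lam ^ 2) ^ (2 * ν / (2 * ν + (d : ℝ)))))
    (Ctil : ℝ) (hCtil : Ctil = max 1
      ((2 + 2 * ν / (d : ℝ)) ^ (2 * ν / (d : ℝ)) * (6 * CMat) ^ (1 + 2 * ν / (d : ℝ))))
    (Tlam : ℕ) (hTlam : ∀ t : ℕ, Tlam ≤ t →
      Ctil * (t : ℝ) ^ (-(2 * ν / (d : ℝ))) * Real.log (t : ℝ) ^ (2 * ν / (d : ℝ)) ≤ lamBar ^ 2)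
    (TMat : ℕ) (hTMat : TMat = max 4 (max T0 Tlam))
    (hdν : ν < (d : ℝ))
(f : X → ℝ) (n : ℕ) (c : Fin n → ℝ) (xv : Fin n → X)
    (hf : ∀ x : X, f x = ∑ i, c i * k (xv i) x)
    (B : ℝ) (hB : 0 < B)
    (hnorm : Real.sqrt (∑ i, ∑ j, c i * c j * k (xv i) (xv j)) ≤ B)
    (xstar : X) (hstar : ∀ x : X, f x ≤ f xstar)
    (xseq : ℕ → X)
    (hinv : ∀ t : ℕ, 1 ≤ t → IsUnit (gram k (prefN xseq t)).det)
    (hucb : ∀ (t : ℕ) (x : X),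
      postMean k (prefN xseq t) f x + B * postStdInv k (prefN xseq t) x ≤
        postMean k (prefN xseq t) f (xseq t) + B * postStdInv k (prefN xseq t) (xseq t)) :
    ∀ T : ℕ, 0 < T →
      ∑ t : Fin T, (f xstar - f (xseq t.1)) ≤
        2 * B * ((TMat : ℝ) + Real.sqrt Ctil * ((d : ℝ) / ((d : ℝ) - ν)) *
          (T : ℝ) ^ (((d : ℝ) - ν) / (d : ℝ)) * Real.log (T : ℝ) ^ (ν / (d : ℝ))) := by
  
  classical
  intro T hT
  -- basic facts
  have hd0 : (0:ℝ) < (d:ℝ) := by exact_mod_cast hd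
  have hB0 : (0:ℝ) ≤ B := le_of_lt hB
  have hCtil1 : (1:ℝ) ≤ Ctil := by rw [hCtil]; exact le_max_left _ _
  have hCtil0 : (0:ℝ) < Ctil := lt_of_lt_of_le one_pos hCtil1
  have hTMat4 : 4 ≤ TMat := by rw [hTMat]; exact le_max_left _ _
  have hTMatT0 : T0 ≤ TMat := by
    rw [hTMat]; exact le_trans (le_max_left _ _) (le_max_right _ _)
  have hTMatTlam : Tlam ≤ TMat := by
    rw [hTMat]; exact le_trans (le_max_right _ _) (le_max_right _ _)
  set wsq : ℕ → ℝ := fun m =>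
    Ctil * (m:ℝ) ^ (-(2 * ν / (d:ℝ))) * Real.log (m:ℝ) ^ (2 * ν / (d:ℝ)) with hwsq
  set cs : ℕ → ℝ := fun m => if m ≤ TMat then 1 else min 1 (Real.sqrt (wsq m)) with hcs
  -- Gram identities
  have hKK : ∀ N : ℕ, gram k (prefN xseq N) * (gram k (prefN xseq N))⁻¹ = 1 := by
    intro N
    rcases Nat.eq_zero_or_pos N with h0 | hpos
    · subst h0
      exact Matrix.mul_nonsing_inv _ (by rw [Matrix.det_fin_zero]; exact isUnit_one)
    · exact Matrix.mul_nonsing_inv _ (hinv N hpos)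
  -- norm bound
  have hq0 : 0 ≤ qf k xv c c := qf_nonneg hpsd xv c
  have hqc : qf k xv c c ≤ B ^ 2 := by
    have h1 : Real.sqrt (qf k xv c c) ≤ B := hnorm
    calc qf k xv c c = Real.sqrt (qf k xv c c) ^ 2 := (Real.sq_sqrt hq0).symm
    _ ≤ B ^ 2 := pow_le_pow_left₀ (Real.sqrt_nonneg _) h1 2
  have habs : ∀ y, |f y| ≤ B := f_abs_le hsym hpsd hk1 c xv f hf B hB0 hqc
  -- per-step regret bound
  have hreg : ∀ t : ℕ,
      f xstar - f (xseq t) ≤ 2 * B * min 1 (postStdInv k (prefN xseq t) (xseq t)) := by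
    intro t
    have hσ0 : 0 ≤ postStdInv k (prefN xseq t) (xseq t) := Real.sqrt_nonneg _
    have h2B : f xstar - f (xseq t) ≤ 2 * B * 1 := by
      have h1 := habs xstar; have h2 := habs (xseq t)
      rw [abs_le] at h1 h2
      have := h1.2; have := h2.1
      linarith [h1.2, h2.1]
    have hσb : f xstar - f (xseq t)
        ≤ 2 * B * postStdInv k (prefN xseq t) (xseq t) := by
      have hK := hKK t
      have h1 := interp_bound hsym hpsd c xv f hf B hB0 hqc (prefN xseq t) hK xstar
      have h2 := interp_bound hsym hpsd c xv f hf B hB0 hqc (prefN xseq t) hK (xseq t)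
      have h3 := hucb t xstar
      rw [abs_le] at h1 h2
      linarith [h1.1, h1.2, h2.1, h2.2, h3]
    rcases le_total 1 (postStdInv k (prefN xseq t) (xseq t)) with hc1 | hc1
    · rw [min_eq_left hc1]; exact h2B
    · rw [min_eq_right hc1]; exact hσb
  -- counting bound
  have hcount : ∀ m : ℕ, TMat ≤ m → Real.sqrt (wsq m) ≤ 1 →
      ((Finset.range T).filter
        (fun t => Real.sqrt (wsq m) ≤ postStdInv k (prefN xseq t) (xseq t))).card < m := by
    intro m hm hw1
    have hm4 : 4 ≤ m := le_trans hTMat4 hm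
    have hm0 : (0:ℝ) < m := by exact_mod_cast (by omega : 0 < m)
    have hm1R : (1:ℝ) ≤ m := by exact_mod_cast (by omega : 1 ≤ m)
    have hlogm1 : 1 ≤ Real.log m := by
      rw [Real.le_log_iff_exp_le hm0]
      have h4 : (4:ℝ) ≤ m := by exact_mod_cast hm4
      linarith [Real.exp_one_lt_d9]
    have hlogm0 : (0:ℝ) < Real.log m := lt_of_lt_of_le one_pos hlogm1
    have hwpos : 0 < wsq m := by
      simp only [hwsq]
      have h1 : (0:ℝ) < (m:ℝ) ^ (-(2 * ν / (d:ℝ))) := Real.rpow_pos_of_pos hm0 _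
      have h2 : (0:ℝ) < Real.log (m:ℝ) ^ (2 * ν / (d:ℝ)) := Real.rpow_pos_of_pos hlogm0 _
      positivity
    have hwsq1 : wsq m ≤ 1 := by
      have h2 := pow_le_pow_left₀ (Real.sqrt_nonneg (wsq m)) hw1 2
      rw [Real.sq_sqrt (le_of_lt hwpos)] at h2
      simpa using h2
    by_contra hcon
    push_neg at hcon
    set s := (Finset.range T).filter
        (fun t => Real.sqrt (wsq m) ≤ postStdInv k (prefN xseq t) (xseq t)) with hs
    set emb := s.orderEmbOfCardLe hcon with hembdef
    set p : Fin m → X := fun i => xseq (emb i) with hp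
    set lam := Real.sqrt (wsq m / 2) with hlam
    have hlam2 : lam ^ 2 = wsq m / 2 := Real.sq_sqrt (by linarith)
    have hlampos : 0 < lam := Real.sqrt_pos.mpr (by linarith)
    have hlamle : lam ≤ lamBar := by
      have h1 : wsq m ≤ lamBar ^ 2 := by
        have h2 := hTlam m (le_trans hTMatTlam hm)
        simpa [hwsq] using h2
      calc lam ≤ Real.sqrt (wsq m) := Real.sqrt_le_sqrt (by linarith)
      _ ≤ Real.sqrt (lamBar ^ 2) := Real.sqrt_le_sqrt h1
      _ = lamBar := Real.sqrt_sq (le_of_lt hlamBar)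
    have hw : ∀ (i : Fin m) (cc : Fin i.1 → ℝ),
        2 * lam ^ 2 ≤ k (p i) (p i)
          - 2 * (cc ⬝ᵥ kvec k (fun j : Fin i.1 => p ⟨j.1, lt_trans j.2 i.2⟩) (p i))
          + cc ⬝ᵥ (gram k (fun j : Fin i.1 => p ⟨j.1, lt_trans j.2 i.2⟩) *ᵥ cc) := by
      intro i cc
      have hmem : (emb i : ℕ) ∈ s := Finset.orderEmbOfCardLe_mem s hcon i
      have hmem2 : Real.sqrt (wsq m)
          ≤ postStdInv k (prefN xseq (emb i)) (xseq (emb i)) :=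
        (Finset.mem_filter.mp hmem).2
      have herr0 : 0 ≤ k (xseq (emb i)) (xseq (emb i))
          - kvec k (prefN xseq (emb i)) (xseq (emb i)) ⬝ᵥ
            ((gram k (prefN xseq (emb i)))⁻¹ *ᵥ kvec k (prefN xseq (emb i)) (xseq (emb i))) :=
        err_nonneg hsym hpsd _ _ (hKK (emb i))
      have herr : wsq m ≤ k (xseq (emb i)) (xseq (emb i))
          - kvec k (prefN xseq (emb i)) (xseq (emb i)) ⬝ᵥ
            ((gram k (prefN xseq (emb i)))⁻¹ *ᵥ kvec k (prefN xseq (emb i)) (xseq (emb i))) := by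
        simp only [postStdInv] at hmem2
        have h2 := pow_le_pow_left₀ (Real.sqrt_nonneg (wsq m)) hmem2 2
        rw [Real.sq_sqrt (le_of_lt hwpos), Real.sq_sqrt herr0] at h2
        exact h2
      set tmap : Fin i.1 → Fin (emb i : ℕ) := fun l =>
        ⟨(emb ⟨l.1, lt_trans l.2 i.2⟩ : ℕ), by
          have hlt : (⟨l.1, lt_trans l.2 i.2⟩ : Fin m) < i := by
            rw [Fin.lt_def]; exact l.2
          exact emb.strictMono hlt⟩ with htmap
      set dd : Fin (emb i : ℕ) → ℝ := fun j => ∑ l, if tmap l = j then cc l else 0 with hdd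
      have hdot : ∀ g : Fin (emb i : ℕ) → ℝ, dd ⬝ᵥ g = ∑ l, cc l * g (tmap l) := by
        intro g
        calc dd ⬝ᵥ g = ∑ j, (∑ l, if tmap l = j then cc l else 0) * g j := rfl
        _ = ∑ j, ∑ l, (if tmap l = j then cc l * g j else 0) := by
            refine Finset.sum_congr rfl fun j _ => ?_
            rw [Finset.sum_mul]
            refine Finset.sum_congr rfl fun l _ => ?_
            by_cases h : tmap l = j <;> simp [h]
        _ = ∑ l, ∑ j, (if tmap l = j then cc l * g j else 0) := Finset.sum_comm
        _ = ∑ l, cc l * g (tmap l) := by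
            refine Finset.sum_congr rfl fun l _ => ?_
            simp
      have hdkv : dd ⬝ᵥ kvec k (prefN xseq (emb i)) (xseq (emb i))
          = cc ⬝ᵥ kvec k (fun j : Fin i.1 => p ⟨j.1, lt_trans j.2 i.2⟩) (p i) := by
        rw [hdot]
        rfl
      have hdKd : dd ⬝ᵥ (gram k (prefN xseq (emb i)) *ᵥ dd)
          = cc ⬝ᵥ (gram k (fun j : Fin i.1 => p ⟨j.1, lt_trans j.2 i.2⟩) *ᵥ cc) := by
        have hrow : ∀ i0, (gram k (prefN xseq (emb i)) *ᵥ dd) i0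
            = ∑ l, cc l * gram k (prefN xseq (emb i)) i0 (tmap l) := by
          intro i0
          have h1 : (gram k (prefN xseq (emb i)) *ᵥ dd) i0
              = dd ⬝ᵥ (fun j => gram k (prefN xseq (emb i)) i0 j) := by
            simp [Matrix.mulVec, dotProduct, mul_comm]
          rw [h1, hdot]
        rw [hdot]
        have hR : cc ⬝ᵥ (gram k (fun j : Fin i.1 => p ⟨j.1, lt_trans j.2 i.2⟩) *ᵥ cc)
            = ∑ l, cc l * ∑ l', gram k (fun j : Fin i.1 => p ⟨j.1, lt_trans j.2 i.2⟩) l l' * cc l' := rfl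
        rw [hR]
        refine Finset.sum_congr rfl fun l _ => ?_
        rw [hrow]
        congr 1
        refine Finset.sum_congr rfl fun l' _ => ?_
        rw [mul_comm]
        rfl
      have hproj := proj_bound hsym hpsd (prefN xseq (emb i)) (xseq (emb i)) (hKK (emb i)) dd
      have h2l : 2 * lam ^ 2 = wsq m := by rw [hlam2]; ring
      rw [h2l]
      calc wsq m ≤ k (xseq (emb i)) (xseq (emb i))
          - kvec k (prefN xseq (emb i)) (xseq (emb i)) ⬝ᵥ
            ((gram k (prefN xseq (emb i)))⁻¹ *ᵥ kvec k (prefN xseq (emb i)) (xseq (emb i))) := herr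
      _ ≤ k (xseq (emb i)) (xseq (emb i))
          - 2 * (dd ⬝ᵥ kvec k (prefN xseq (emb i)) (xseq (emb i)))
          + dd ⬝ᵥ (gram k (prefN xseq (emb i)) *ᵥ dd) := hproj
      _ = k (p i) (p i)
          - 2 * (cc ⬝ᵥ kvec k (fun j : Fin i.1 => p ⟨j.1, lt_trans j.2 i.2⟩) (p i))
          + cc ⬝ᵥ (gram k (fun j : Fin i.1 => p ⟨j.1, lt_trans j.2 i.2⟩) *ᵥ cc) := by
          rw [hdkv, hdKd]
    -- information-gain contradiction
    have hlog := logdet_lower hsym hpsd m p lam hlampos hw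
    have hmig : ENNReal.ofReal ((1/2 : ℝ) * ((m:ℝ) * Real.log 3)) ≤ mig k m lam := by
      refine le_trans ?_ (le_iSup (fun xs : Fin m → X =>
        ENNReal.ofReal ((1 / 2) * Real.log ((1 + (lam ^ 2)⁻¹ • gram k xs).det))) p)
      apply ENNReal.ofReal_le_ofReal
      linarith [hlog]
    have hup := hgain lam hlampos hlamle m (le_trans hTMatT0 hm)
    have hcomb' := le_trans hmig hup
    rw [ENNReal.ofReal_le_ofReal_iff'] at hcomb'
    have hlog3 : 1 ≤ Real.log 3 := by
      rw [Real.le_log_iff_exp_le (by norm_num)]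
      linarith [Real.exp_one_lt_d9]
    have hpos3 : 0 < (1/2 : ℝ) * ((m:ℝ) * Real.log 3) := by nlinarith
    have hnum := numeric_contra (d:ℝ) ν CMat Ctil (m:ℝ) (Real.log (m:ℝ)) (lam ^ 2)
      hd0 hν hCMat hCtil1
      (by rw [hCtil]; exact le_max_right _ _)
      (by exact_mod_cast hm4) rfl hlogm1
      (by rw [hlam2])
      (by simpa [hwsq] using hwsq1)
    rcases hcomb' with hcomb | hcomb
    · linarith
    · linarith
  -- counts for the rearrangement lemma
  have hcounts : ∀ m : ℕ, 1 ≤ m →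
      (((Finset.range T).filter
        (fun t => cs m < min 1 (postStdInv k (prefN xseq t) (xseq t)))).card < m) := by
    intro m hm
    by_cases hmT : m ≤ TMat
    · have hempty : (Finset.range T).filter
          (fun t => cs m < min 1 (postStdInv k (prefN xseq t) (xseq t))) = ∅ := by
        apply Finset.filter_false_of_mem
        intro t ht
        simp only [hcs, if_pos hmT]
        exact not_lt.mpr (min_le_left _ _)
      rw [hempty, Finset.card_empty]
      omega
    · push_neg at hmT
      by_cases hw1 : Real.sqrt (wsq m) ≤ 1
      · have hlt := hcount m (by omega) hw1
        refine lt_of_le_of_lt (Finset.card_le_card ?_) hlt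
        intro t ht
        rcases Finset.mem_filter.mp ht with ⟨ht1, ht2⟩
        refine Finset.mem_filter.mpr ⟨ht1, ?_⟩
        simp only [hcs, if_neg (by omega : ¬ m ≤ TMat), min_eq_right hw1] at ht2
        exact le_trans (le_of_lt ht2) (min_le_right _ _)
      · push_neg at hw1
        have hempty : (Finset.range T).filter
            (fun t => cs m < min 1 (postStdInv k (prefN xseq t) (xseq t))) = ∅ := by
          apply Finset.filter_false_of_mem
          intro t ht
          simp only [hcs, if_neg (by omega : ¬ m ≤ TMat), min_eq_left (le_of_lt hw1)]
          exact not_lt.mpr (min_le_left _ _)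
        rw [hempty, Finset.card_empty]
        omega
  -- antitonicity of the dominating sequence
  have hform : ∀ mm : ℕ, 1 ≤ mm →
      wsq mm = Ctil * (Real.log mm / (mm:ℝ)) ^ (2*ν/(d:ℝ)) := by
    intro mm hmm
    have h0 : (0:ℝ) < mm := by exact_mod_cast hmm
    have hl0 : (0:ℝ) ≤ Real.log mm := Real.log_nonneg (by exact_mod_cast hmm)
    simp only [hwsq]
    rw [Real.div_rpow hl0 (le_of_lt h0), Real.rpow_neg (le_of_lt h0), div_eq_mul_inv]
    ring
  have hwsq_anti : ∀ a b : ℕ, TMat < a → a ≤ b → wsq b ≤ wsq a := by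
    intro a b ha hab
    have ha1 : 1 ≤ a := by omega
    have hb1 : 1 ≤ b := by omega
    have hea : Real.exp 1 ≤ (a:ℝ) := by
      have h5 : (5:ℝ) ≤ a := by exact_mod_cast (by omega : 5 ≤ a)
      linarith [Real.exp_one_lt_d9]
    have heb : Real.exp 1 ≤ (b:ℝ) := by
      refine le_trans hea ?_
      exact_mod_cast hab
    have hmono : Real.log b / (b:ℝ) ≤ Real.log a / (a:ℝ) :=
      Real.log_div_self_antitoneOn hea heb (by exact_mod_cast hab)
    rw [hform a ha1, hform b hb1]
    apply mul_le_mul_of_nonneg_left _ (le_of_lt hCtil0)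
    apply Real.rpow_le_rpow _ hmono (by positivity)
    have hb0 : (0:ℝ) < b := by exact_mod_cast hb1
    have hlb : (0:ℝ) ≤ Real.log (b:ℝ) := Real.log_nonneg (by exact_mod_cast hb1)
    positivity
  have hcs_anti : ∀ a b : ℕ, 1 ≤ a → a ≤ b → cs b ≤ cs a := by
    intro a b ha hab
    simp only [hcs]
    by_cases hb : b ≤ TMat
    · have haT : a ≤ TMat := le_trans hab hb
      simp [hb, haT]
    · by_cases haT : a ≤ TMat
      · simp only [if_neg hb, if_pos haT]
        exact min_le_left _ _
      · simp only [if_neg hb, if_neg haT]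
        exact min_le_min le_rfl (Real.sqrt_le_sqrt (hwsq_anti a b (by omega) hab))
  -- rearrangement
  have hv0 : ∀ t ∈ Finset.range T, (0:ℝ) ≤ min 1 (postStdInv k (prefN xseq t) (xseq t)) :=
    fun t _ => le_min (by norm_num) (Real.sqrt_nonneg _)
  have hM6 := sum_le_of_counts T (Finset.range T) (Finset.card_range T)
    (fun t => min 1 (postStdInv k (prefN xseq t) (xseq t))) cs hv0 hcs_anti hcounts
  -- bound on ∑ cs (i+1)
  have hsqrt_wsq : ∀ mm : ℕ, 1 ≤ mm → Real.sqrt (wsq mm)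
      = Real.sqrt Ctil * (mm:ℝ) ^ (-(ν/(d:ℝ))) * Real.log (mm:ℝ) ^ (ν/(d:ℝ)) := by
    intro mm hmm
    have h0 : (0:ℝ) < mm := by exact_mod_cast hmm
    have hl0 : (0:ℝ) ≤ Real.log mm := Real.log_nonneg (by exact_mod_cast hmm)
    have hr0 : (0:ℝ) < (mm:ℝ) ^ (-(2*ν/(d:ℝ))) := Real.rpow_pos_of_pos h0 _
    simp only [hwsq]
    rw [Real.sqrt_mul (by positivity) _, Real.sqrt_mul (le_of_lt hCtil0) _]
    congr 1
    · congr 1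
      rw [Real.sqrt_eq_rpow, ← Real.rpow_mul (le_of_lt h0)]
      congr 1
      ring
    · rw [Real.sqrt_eq_rpow, ← Real.rpow_mul hl0]
      congr 1
      ring
  have hlogT0 : (0:ℝ) ≤ Real.log T := Real.log_nonneg (by exact_mod_cast hT)
  have hcs_le : ∀ i : ℕ, cs (i+1) ≤ (if i+1 ≤ TMat then (1:ℝ) else 0)
      + (if TMat < i+1 then Real.sqrt (wsq (i+1)) else 0) := by
    intro i
    simp only [hcs]
    by_cases h : i+1 ≤ TMat
    · simp [h, not_lt.mpr h]
    · push_neg at h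
      simp only [if_neg (not_le.mpr h), if_pos h]
      calc min 1 (Real.sqrt (wsq (i+1))) ≤ Real.sqrt (wsq (i+1)) := min_le_right _ _
      _ = 0 + Real.sqrt (wsq (i+1)) := by ring
  have hpart1 : (∑ i ∈ Finset.range T, if i+1 ≤ TMat then (1:ℝ) else 0) ≤ (TMat:ℝ) := by
    rw [Finset.sum_boole]
    have hsub : (Finset.range T).filter (fun i => i+1 ≤ TMat) ⊆ Finset.range TMat := by
      intro x hx
      rcases Finset.mem_filter.mp hx with ⟨_, h2⟩
      exact Finset.mem_range.mpr (by omega)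
    have hcardle := Finset.card_le_card hsub
    rw [Finset.card_range] at hcardle
    exact_mod_cast hcardle
  have hp0 : (0:ℝ) < ν/(d:ℝ) := by positivity
  have hp1 : ν/(d:ℝ) < 1 := by rw [div_lt_one hd0]; exact hdν
  have hpart2 : (∑ i ∈ Finset.range T, if TMat < i+1 then Real.sqrt (wsq (i+1)) else 0)
      ≤ Real.sqrt Ctil * ((d:ℝ)/((d:ℝ)-ν)) * (T:ℝ) ^ (((d:ℝ)-ν)/(d:ℝ))
        * Real.log (T:ℝ) ^ (ν/(d:ℝ)) := by
    have hterm : ∀ i ∈ Finset.range T, (if TMat < i+1 then Real.sqrt (wsq (i+1)) else 0)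
        ≤ Real.sqrt Ctil * ((i:ℝ)+1) ^ (-(ν/(d:ℝ))) * Real.log (T:ℝ) ^ (ν/(d:ℝ)) := by
      intro i hi
      have hi1 : (0:ℝ) < (i:ℝ)+1 := by positivity
      have hrp : (0:ℝ) ≤ ((i:ℝ)+1) ^ (-(ν/(d:ℝ))) := le_of_lt (Real.rpow_pos_of_pos hi1 _)
      have hlTp : (0:ℝ) ≤ Real.log (T:ℝ) ^ (ν/(d:ℝ)) := Real.rpow_nonneg hlogT0 _
      by_cases h : TMat < i+1
      · rw [if_pos h]
        have hcast : ((i+1 : ℕ):ℝ) = (i:ℝ)+1 := by push_cast; ring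
        rw [hsqrt_wsq (i+1) (by omega), hcast]
        have hlogle : Real.log ((i:ℝ)+1) ^ (ν/(d:ℝ)) ≤ Real.log (T:ℝ) ^ (ν/(d:ℝ)) := by
          apply Real.rpow_le_rpow (Real.log_nonneg (by linarith [Nat.cast_nonneg (α := ℝ) i]))
            _ (le_of_lt hp0)
          apply Real.log_le_log hi1
          have hiT : i+1 ≤ T := Finset.mem_range.mp hi
          exact_mod_cast hiT
        exact mul_le_mul_of_nonneg_left hlogle (by positivity)
      · rw [if_neg h]
        positivity
    calc (∑ i ∈ Finset.range T, if TMat < i+1 then Real.sqrt (wsq (i+1)) else 0)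
        ≤ ∑ i ∈ Finset.range T,
          Real.sqrt Ctil * ((i:ℝ)+1) ^ (-(ν/(d:ℝ))) * Real.log (T:ℝ) ^ (ν/(d:ℝ)) :=
        Finset.sum_le_sum hterm
    _ = Real.sqrt Ctil * Real.log (T:ℝ) ^ (ν/(d:ℝ))
        * ∑ i ∈ Finset.range T, ((i:ℝ)+1) ^ (-(ν/(d:ℝ))) := by
        rw [Finset.mul_sum]
        exact Finset.sum_congr rfl fun i _ => by ring
    _ ≤ Real.sqrt Ctil * Real.log (T:ℝ) ^ (ν/(d:ℝ))
        * ((T:ℝ) ^ ((1:ℝ) - ν/(d:ℝ)) / (1 - ν/(d:ℝ))) := by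
        apply mul_le_mul_of_nonneg_left (sum_rpow_le hp0 hp1 T)
        have hlTp : (0:ℝ) ≤ Real.log (T:ℝ) ^ (ν/(d:ℝ)) := Real.rpow_nonneg hlogT0 _
        positivity
    _ = Real.sqrt Ctil * ((d:ℝ)/((d:ℝ)-ν)) * (T:ℝ) ^ (((d:ℝ)-ν)/(d:ℝ))
        * Real.log (T:ℝ) ^ (ν/(d:ℝ)) := by
        have hdν0 : (0:ℝ) < (d:ℝ) - ν := by linarith
        have hexp1 : (1:ℝ) - ν/(d:ℝ) = ((d:ℝ)-ν)/(d:ℝ) := by field_simp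
        rw [hexp1]
        have hd' : ((d:ℝ)-ν)/(d:ℝ) ≠ 0 := by positivity
        field_simp
  have hfinal_cs : ∑ i ∈ Finset.range T, cs (i+1)
      ≤ (TMat:ℝ) + Real.sqrt Ctil * ((d:ℝ)/((d:ℝ)-ν)) * (T:ℝ) ^ (((d:ℝ)-ν)/(d:ℝ))
        * Real.log (T:ℝ) ^ (ν/(d:ℝ)) := by
    calc ∑ i ∈ Finset.range T, cs (i+1)
        ≤ ∑ i ∈ Finset.range T, ((if i+1 ≤ TMat then (1:ℝ) else 0)
          + (if TMat < i+1 then Real.sqrt (wsq (i+1)) else 0)) :=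
          Finset.sum_le_sum fun i _ => hcs_le i
    _ = (∑ i ∈ Finset.range T, if i+1 ≤ TMat then (1:ℝ) else 0)
        + ∑ i ∈ Finset.range T, (if TMat < i+1 then Real.sqrt (wsq (i+1)) else 0) :=
        Finset.sum_add_distrib
    _ ≤ _ := add_le_add hpart1 hpart2
  have hsum0 : ∑ t : Fin T, (f xstar - f (xseq t.1))
      = ∑ t ∈ Finset.range T, (f xstar - f (xseq t)) :=
    Fin.sum_univ_eq_sum_range (fun i => f xstar - f (xseq i)) T
  rw [hsum0]
  calc ∑ t ∈ Finset.range T, (f xstar - f (xseq t))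
      ≤ ∑ t ∈ Finset.range T, 2 * B * min 1 (postStdInv k (prefN xseq t) (xseq t)) :=
      Finset.sum_le_sum fun t _ => hreg t
  _ = 2 * B * ∑ t ∈ Finset.range T, min 1 (postStdInv k (prefN xseq t) (xseq t)) := by
      rw [Finset.mul_sum]
  _ ≤ 2 * B * ∑ i ∈ Finset.range T, cs (i+1) := by
      apply mul_le_mul_of_nonneg_left hM6 (by linarith)
  _ ≤ _ := by
      apply mul_le_mul_of_nonneg_left hfinal_cs (by linarith)
end
end

section
/- Simple regret for GP-UCB under a Matérn-type information-gain bound: assume k(x, x) ≤ 1 for all x ∈ X and that the Matérn-type information-gain hypothesis holds. Let f belong to the pre-RKHS of k with ‖f‖_k ≤ B for some B > 0, let x* ∈ X satisfy f(x*) = sup_{x ∈ X} f(x), and suppose the sequence (x_t)_{t≥1} follows the GP-UCB rule with parameter B. Then for every integer T ≥ T̄_Mat, the simple regret of the best queried point satisfies f(x*) − max_{t ∈ {1, …, T}} f(x_t) ≤ 2B · C̃_Mat^{1/2} · T^{−ν/d} · (ln T)^{ν/d}. -/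
open Matrix

noncomputable section

set_option maxHeartbeats 1600000

section GpUcbAux

variable {X : Type*} (k : X → X → ℝ)

lemma quad_nonneg (hpsd : ∀ (n : ℕ) (xv : Fin n → X) (c : Fin n → ℝ),
      0 ≤ ∑ i, ∑ j, c i * c j * k (xv i) (xv j))
    {ι : Type*} [Fintype ι] (z : ι → X) (a : ι → ℝ) :
    0 ≤ ∑ i, ∑ j, a i * a j * k (z i) (z j) := by
  classical
  let e := (Fintype.equivFin ι).symm
  have := hpsd (Fintype.card ι) (z ∘ e) (a ∘ e)
  calc (0:ℝ) ≤ ∑ i, ∑ j, (a ∘ e) i * (a ∘ e) j * k ((z ∘ e) i) ((z ∘ e) j) := this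
    _ = ∑ i, ∑ j, a i * a j * k (z i) (z j) := by
        rw [← Equiv.sum_comp e (fun i => ∑ j, a i * a j * k (z i) (z j))]
        refine Finset.sum_congr rfl fun i _ => ?_
        rw [← Equiv.sum_comp e (fun j => a (e i) * a j * k (z (e i)) (z j))]
        rfl

lemma kernel_cs (hsym : ∀ x y : X, k x y = k y x)
    (hpsd : ∀ (n : ℕ) (xv : Fin n → X) (c : Fin n → ℝ),
      0 ≤ ∑ i, ∑ j, c i * c j * k (xv i) (xv j))
    {ι : Type*} [Fintype ι] (z : ι → X) (a b : ι → ℝ) :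
    (∑ i, ∑ j, a i * b j * k (z i) (z j))^2 ≤
      (∑ i, ∑ j, a i * a j * k (z i) (z j)) * (∑ i, ∑ j, b i * b j * k (z i) (z j)) := by
  classical
  set Qa := ∑ i, ∑ j, a i * a j * k (z i) (z j) with hQa
  set Qb := ∑ i, ∑ j, b i * b j * k (z i) (z j) with hQb
  set Bab := ∑ i, ∑ j, a i * b j * k (z i) (z j) with hBab
  have hswap : ∑ i, ∑ j, b i * a j * k (z i) (z j) = Bab := by
    rw [hBab, Finset.sum_comm]
    refine Finset.sum_congr rfl fun i _ => Finset.sum_congr rfl fun j _ => ?_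
    rw [hsym (z j) (z i)]; ring
  have key : ∀ x : ℝ, 0 ≤ Qa * (x * x) + (2 * Bab) * x + Qb := by
    intro x
    have h0 := quad_nonneg k hpsd z (fun i => x * a i + b i)
    have hexp : ∑ i, ∑ j, (x * a i + b i) * (x * a j + b j) * k (z i) (z j)
        = Qa * (x * x) + (2 * Bab) * x + Qb := by
      have : ∀ i j, (x * a i + b i) * (x * a j + b j) * k (z i) (z j)
          = (x*x) * (a i * a j * k (z i) (z j)) + x * (a i * b j * k (z i) (z j))
            + x * (b i * a j * k (z i) (z j)) + b i * b j * k (z i) (z j) := by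
        intro i j; ring
      simp only [this, Finset.sum_add_distrib, ← Finset.mul_sum]
      rw [hswap]; ring
    rw [hexp] at h0; exact h0
  have hdisc := discrim_le_zero key
  rw [discrim] at hdisc
  nlinarith [hdisc]

variable {ι : Type*} [Fintype ι] [DecidableEq ι]

lemma inv_symm (hsym : ∀ x y : X, k x y = k y x)
    (xs : ι → X) : ((gram k xs)⁻¹)ᵀ = (gram k xs)⁻¹ := by
  rw [Matrix.transpose_nonsing_inv]
  congr 1
  ext i j
  exact hsym (xs j) (xs i)

lemma dot_inv_comm (hsym : ∀ x y : X, k x y = k y x)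
    (xs : ι → X) (u g : ι → ℝ) :
    ((gram k xs)⁻¹ *ᵥ u) ⬝ᵥ g = u ⬝ᵥ ((gram k xs)⁻¹ *ᵥ g) := by
  rw [Matrix.dotProduct_mulVec, ← Matrix.mulVec_transpose, inv_symm k hsym]

lemma gram_mulVec_inv (xs : ι → X)
    (hdet : IsUnit (gram k xs).det) (u : ι → ℝ) :
    gram k xs *ᵥ ((gram k xs)⁻¹ *ᵥ u) = u := by
  rw [Matrix.mulVec_mulVec, Matrix.mul_nonsing_inv _ hdet, Matrix.one_mulVec]

lemma quad_resid (hsym : ∀ x y : X, k x y = k y x) (xs : ι → X)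
    (hdet : IsUnit (gram k xs).det) (x : X) :
    (∑ p : ι ⊕ Unit, ∑ q : ι ⊕ Unit,
        (Sum.elim (fun j => -(((gram k xs)⁻¹ *ᵥ kvec k xs x) j)) (fun _ => (1:ℝ)) p) *
        (Sum.elim (fun j => -(((gram k xs)⁻¹ *ᵥ kvec k xs x) j)) (fun _ => (1:ℝ)) q) *
        k (Sum.elim xs (fun _ => x) p) (Sum.elim xs (fun _ => x) q))
      = k x x - kvec k xs x ⬝ᵥ ((gram k xs)⁻¹ *ᵥ kvec k xs x) := by
  set w := (gram k xs)⁻¹ *ᵥ kvec k xs x with hw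
  have h1 : ∑ i, ∑ j, w i * w j * k (xs i) (xs j) = w ⬝ᵥ (gram k xs *ᵥ w) := by
    simp only [dotProduct, Matrix.mulVec, _root_.gram, Finset.mul_sum]
    exact Finset.sum_congr rfl fun i _ => Finset.sum_congr rfl fun j _ => by ring
  have h2 : gram k xs *ᵥ w = kvec k xs x := gram_mulVec_inv k xs hdet _
  have h4 : ∑ i, w i * k (xs i) x = w ⬝ᵥ kvec k xs x := rfl
  have h5 : ∑ i, w i * k x (xs i) = w ⬝ᵥ kvec k xs x := by
    refine Finset.sum_congr rfl fun i _ => ?_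
    rw [hsym x (xs i)]; rfl
  have h6 : w ⬝ᵥ kvec k xs x = kvec k xs x ⬝ᵥ w := dotProduct_comm _ _
  simp only [Fintype.sum_sum_type, Sum.elim_inl, Sum.elim_inr, Finset.univ_unique,
    Finset.sum_singleton, one_mul, mul_one, neg_mul, mul_neg, neg_neg]
  rw [Finset.sum_add_distrib]
  rw [show (∑ i, ∑ j, w i * w j * k (xs i) (xs j)) = w ⬝ᵥ kvec k xs x from by rw [h1, h2]]
  rw [Finset.sum_neg_distrib, h4,
    show (∑ i, -(w i * k x (xs i))) = -(∑ i, w i * k x (xs i)) from Finset.sum_neg_distrib _,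
    h5, h6]
  ring

lemma resid_nonneg (hsym : ∀ x y : X, k x y = k y x)
    (hpsd : ∀ (n : ℕ) (xv : Fin n → X) (c : Fin n → ℝ),
      0 ≤ ∑ i, ∑ j, c i * c j * k (xv i) (xv j))
    (xs : ι → X) (hdet : IsUnit (gram k xs).det) (x : X) :
    0 ≤ k x x - kvec k xs x ⬝ᵥ ((gram k xs)⁻¹ *ᵥ kvec k xs x) := by
  rw [← quad_resid k hsym xs hdet x]
  exact quad_nonneg k hpsd _ _

lemma confidence (hsym : ∀ x y : X, k x y = k y x)
    (hpsd : ∀ (n : ℕ) (xv : Fin n → X) (c : Fin n → ℝ),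
      0 ≤ ∑ i, ∑ j, c i * c j * k (xv i) (xv j))
    (xs : ι → X) (hdet : IsUnit (gram k xs).det)
    (f : X → ℝ) {n : ℕ} (c : Fin n → ℝ) (xv : Fin n → X)
    (hf : ∀ y : X, f y = ∑ i, c i * k (xv i) y) (x : X) :
    |f x - postMean k xs f x| ≤
      Real.sqrt (∑ i, ∑ j, c i * c j * k (xv i) (xv j)) * postStdInv k xs x := by
  classical
  set w := (gram k xs)⁻¹ *ᵥ kvec k xs x with hw
  set bb : ι ⊕ Unit → ℝ := Sum.elim (fun j => -(w j)) (fun _ => (1:ℝ)) with hbb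
  set zz : ι ⊕ Unit → X := Sum.elim xs (fun _ => x) with hzz
  set a : (Fin n ⊕ (ι ⊕ Unit)) → ℝ := Sum.elim c 0 with ha
  set b : (Fin n ⊕ (ι ⊕ Unit)) → ℝ := Sum.elim 0 bb with hb
  set z : (Fin n ⊕ (ι ⊕ Unit)) → X := Sum.elim xv zz with hz
  have hcs := kernel_cs k hsym hpsd z a b
  have hQa : (∑ p, ∑ q, a p * a q * k (z p) (z q))
      = ∑ i, ∑ j, c i * c j * k (xv i) (xv j) := by
    simp [ha, hz, Fintype.sum_sum_type]
  have hQb : (∑ p, ∑ q, b p * b q * k (z p) (z q))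
      = k x x - kvec k xs x ⬝ᵥ w := by
    rw [← quad_resid k hsym xs hdet x]
    simp [hb, hz, Fintype.sum_sum_type, hbb, hzz]
    rfl
  have hBab : (∑ p, ∑ q, a p * b q * k (z p) (z q)) = f x - postMean k xs f x := by
    simp only [ha, hb, hz, Fintype.sum_sum_type, Sum.elim_inl, Sum.elim_inr,
      Pi.zero_apply, zero_mul, mul_zero, Finset.sum_const_zero, zero_add, add_zero]
    have key : ∀ i : Fin n,
        (∑ p : ι, c i * bb (Sum.inl p) * k (xv i) (zz (Sum.inl p)) +
          ∑ p : Unit, c i * bb (Sum.inr p) * k (xv i) (zz (Sum.inr p)))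
        = c i * k (xv i) x - ∑ j, c i * w j * k (xv i) (xs j) := by
      intro i
      simp only [hbb, hzz, Sum.elim_inl, Sum.elim_inr, Finset.univ_unique,
        Finset.sum_singleton, one_mul, mul_one, mul_neg, neg_mul,
        Finset.sum_neg_distrib]
      ring
    rw [Finset.sum_congr rfl fun i _ => key i]
    rw [Finset.sum_sub_distrib]
    have h1 : ∑ i, c i * k (xv i) x = f x := (hf x).symm
    have h2 : (∑ i, ∑ j, c i * w j * k (xv i) (xs j)) = postMean k xs f x := by
      rw [Finset.sum_comm]
      have : ∀ j, (∑ i, c i * w j * k (xv i) (xs j)) = w j * f (xs j) := by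
        intro j; rw [hf (xs j), Finset.mul_sum]
        exact Finset.sum_congr rfl fun i _ => by ring
      rw [Finset.sum_congr rfl fun j _ => this j]
      rw [postMean, hw, ← dot_inv_comm k hsym]
      rfl
    rw [h1, h2]
  rw [hQa, hQb, hBab] at hcs
  have hQann : 0 ≤ ∑ i, ∑ j, c i * c j * k (xv i) (xv j) := hpsd n xv c
  have hpsi : postStdInv k xs x = Real.sqrt (k x x - kvec k xs x ⬝ᵥ w) := by
    rw [postStdInv, hw]
  calc |f x - postMean k xs f x|
      = Real.sqrt ((f x - postMean k xs f x)^2) := (Real.sqrt_sq_eq_abs _).symm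
    _ ≤ Real.sqrt ((∑ i, ∑ j, c i * c j * k (xv i) (xv j)) * (k x x - kvec k xs x ⬝ᵥ w)) :=
        Real.sqrt_le_sqrt hcs
    _ = Real.sqrt (∑ i, ∑ j, c i * c j * k (xv i) (xv j)) *
          Real.sqrt (k x x - kvec k xs x ⬝ᵥ w) := Real.sqrt_mul hQann _
    _ = Real.sqrt (∑ i, ∑ j, c i * c j * k (xv i) (xv j)) * postStdInv k xs x := by
        rw [hpsi]

lemma gram_isHermitian (hsym : ∀ x y : X, k x y = k y x) (xs : ι → X) :
    (gram k xs).IsHermitian := by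
  ext i j
  simp only [Matrix.conjTranspose_apply, _root_.gram, star_trivial]
  exact hsym (xs j) (xs i)

lemma gram_posSemidef (hsym : ∀ x y : X, k x y = k y x)
    (hpsd : ∀ (n : ℕ) (xv : Fin n → X) (c : Fin n → ℝ),
      0 ≤ ∑ i, ∑ j, c i * c j * k (xv i) (xv j)) (xs : ι → X) :
    (gram k xs).PosSemidef := by
  refine Matrix.PosSemidef.of_dotProduct_mulVec_nonneg (gram_isHermitian k hsym xs) fun v => ?_
  have : star v ⬝ᵥ gram k xs *ᵥ v = ∑ i, ∑ j, v i * v j * k (xs i) (xs j) := by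
    simp only [star_trivial, dotProduct, Matrix.mulVec, _root_.gram, Finset.mul_sum]
    exact Finset.sum_congr rfl fun i _ => Finset.sum_congr rfl fun j _ => by ring
  rw [this]
  exact quad_nonneg k hpsd xs v

lemma gram_posDef (hsym : ∀ x y : X, k x y = k y x)
    (hpsd : ∀ (n : ℕ) (xv : Fin n → X) (c : Fin n → ℝ),
      0 ≤ ∑ i, ∑ j, c i * c j * k (xv i) (xv j)) (xs : ι → X)
    (hdet : IsUnit (gram k xs).det) : (gram k xs).PosDef := by
  have hps := gram_posSemidef k hsym hpsd xs
  refine Matrix.PosDef.of_dotProduct_mulVec_pos hps.1 fun v hv => ?_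
  rcases lt_or_eq_of_le (hps.dotProduct_mulVec_nonneg v) with h | h
  · exact h
  · exfalso
    have h0 : gram k xs *ᵥ v = 0 := (hps.dotProduct_mulVec_zero_iff v).mp h.symm
    have : v = 0 := by
      have := congrArg (fun u => (gram k xs)⁻¹ *ᵥ u) h0
      simpa [Matrix.mulVec_mulVec, Matrix.nonsing_inv_mul _ hdet] using this
    exact hv this

lemma smul_one_posDef {l : ℝ} (hl : l ≠ 0) :
    ((l ^ 2 • 1 : Matrix ι ι ℝ)).PosDef := by
  rw [Matrix.smul_one_eq_diagonal]
  exact Matrix.PosDef.diagonal fun _ => by positivity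

lemma reg_posDef (hsym : ∀ x y : X, k x y = k y x)
    (hpsd : ∀ (n : ℕ) (xv : Fin n → X) (c : Fin n → ℝ),
      0 ≤ ∑ i, ∑ j, c i * c j * k (xv i) (xv j)) (xs : ι → X)
    {l : ℝ} (hl : l ≠ 0) : (gram k xs + l ^ 2 • 1).PosDef :=
  Matrix.PosDef.posSemidef_add (gram_posSemidef k hsym hpsd xs) (smul_one_posDef hl)

lemma reg_det_isUnit (hsym : ∀ x y : X, k x y = k y x)
    (hpsd : ∀ (n : ℕ) (xv : Fin n → X) (c : Fin n → ℝ),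
      0 ≤ ∑ i, ∑ j, c i * c j * k (xv i) (xv j)) (xs : ι → X)
    {l : ℝ} (hl : l ≠ 0) : IsUnit (gram k xs + l ^ 2 • 1).det :=
  isUnit_iff_ne_zero.mpr (ne_of_gt (reg_posDef k hsym hpsd xs hl).det_pos)

lemma quad_inv_mono (hsym : ∀ x y : X, k x y = k y x)
    (hpsd : ∀ (n : ℕ) (xv : Fin n → X) (c : Fin n → ℝ),
      0 ≤ ∑ i, ∑ j, c i * c j * k (xv i) (xv j)) (xs : ι → X)
    (hdet : IsUnit (gram k xs).det) {l : ℝ} (hl : l ≠ 0) (v : ι → ℝ) :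
    v ⬝ᵥ ((gram k xs + l ^ 2 • 1)⁻¹ *ᵥ v) ≤ v ⬝ᵥ ((gram k xs)⁻¹ *ᵥ v) := by
  set G := gram k xs with hG
  set A := gram k xs + l ^ 2 • (1 : Matrix ι ι ℝ) with hA
  have hApd := reg_posDef k hsym hpsd xs hl
  have hAu : IsUnit A.det := reg_det_isUnit k hsym hpsd xs hl
  have hGpd := gram_posDef k hsym hpsd xs hdet
  have hGh : G.IsHermitian := gram_isHermitian k hsym xs
  have hcomm : G * A = A * G := by
    rw [hA, Matrix.mul_add, Matrix.add_mul, Matrix.mul_smul, Matrix.smul_mul,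
      Matrix.mul_one, Matrix.one_mul]
  have hMherm : (A * G).IsHermitian := by
    rw [Matrix.IsHermitian, Matrix.conjTranspose_mul, hGh.eq, hApd.1.eq, hcomm]
  have hvm : ∀ u : ι → ℝ, Matrix.vecMul u G = G *ᵥ u := by
    intro u; ext i
    simp only [Matrix.vecMul, Matrix.mulVec, dotProduct, hG, _root_.gram]
    exact Finset.sum_congr rfl fun j _ => by rw [hsym (xs j) (xs i)]; ring
  have hMpd : (A * G).PosDef := by
    refine Matrix.PosDef.of_dotProduct_mulVec_pos hMherm fun u hu => ?_
    have hGu : G *ᵥ u ≠ 0 := by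
      intro h0
      apply hu
      have := congrArg (fun w => G⁻¹ *ᵥ w) h0
      simpa [Matrix.mulVec_mulVec, Matrix.nonsing_inv_mul _ hdet] using this
    have hq1 : u ⬝ᵥ ((G * G) *ᵥ u) = (G *ᵥ u) ⬝ᵥ (G *ᵥ u) := by
      rw [← Matrix.mulVec_mulVec, Matrix.dotProduct_mulVec, hvm]
    have hq1pos : 0 < (G *ᵥ u) ⬝ᵥ (G *ᵥ u) := by
      obtain ⟨i, hi⟩ := Function.ne_iff.mp hGu
      refine Finset.sum_pos' (fun j _ => mul_self_nonneg _) ⟨i, Finset.mem_univ i, ?_⟩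
      exact mul_self_pos.mpr hi
    have hq2 : u ⬝ᵥ ((l ^ 2 • G) *ᵥ u) = l ^ 2 * (u ⬝ᵥ (G *ᵥ u)) := by
      rw [Matrix.smul_mulVec, dotProduct_smul, smul_eq_mul]
    have hq2nn : 0 ≤ l ^ 2 * (u ⬝ᵥ (G *ᵥ u)) := by
      have := hGpd.posSemidef.dotProduct_mulVec_nonneg u
      rw [star_trivial] at this
      positivity
    have hAG : A * G = G * G + l ^ 2 • G := by
      rw [hA, Matrix.add_mul, Matrix.smul_mul, Matrix.one_mul]
    rw [star_trivial, hAG, Matrix.add_mulVec, dotProduct_add, hq1, hq2]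
    linarith
  have hMinv : ((A * G)⁻¹).PosDef := hMpd.inv
  have hdiff : G⁻¹ - A⁻¹ = l ^ 2 • (A * G)⁻¹ := by
    have e0 : G⁻¹ - A⁻¹ = G⁻¹ * A * A⁻¹ - G⁻¹ * G * A⁻¹ := by
      rw [Matrix.mul_assoc, Matrix.mul_nonsing_inv _ hAu, Matrix.mul_one,
        Matrix.nonsing_inv_mul _ hdet, Matrix.one_mul]
    have e1 : G⁻¹ * (A - G) * A⁻¹ = G⁻¹ * A * A⁻¹ - G⁻¹ * G * A⁻¹ := by
      rw [Matrix.mul_sub, Matrix.sub_mul]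
    have e2 : A - G = l ^ 2 • (1 : Matrix ι ι ℝ) := by
      rw [hA]; exact add_sub_cancel_left G _
    have e3 : G⁻¹ * (l ^ 2 • (1 : Matrix ι ι ℝ)) * A⁻¹ = l ^ 2 • (G⁻¹ * A⁻¹) := by
      rw [Matrix.mul_smul, Matrix.mul_one, Matrix.smul_mul]
    rw [e0, ← e1, e2, e3, Matrix.mul_inv_rev]
  have hfin : 0 ≤ v ⬝ᵥ ((G⁻¹ - A⁻¹) *ᵥ v) := by
    rw [hdiff, Matrix.smul_mulVec, dotProduct_smul, smul_eq_mul]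
    have := hMinv.posSemidef.dotProduct_mulVec_nonneg v
    rw [star_trivial] at this
    positivity
  rw [Matrix.sub_mulVec, dotProduct_sub] at hfin
  linarith

lemma reg_inv_quad_nonneg (hsym : ∀ x y : X, k x y = k y x)
    (hpsd : ∀ (n : ℕ) (xv : Fin n → X) (c : Fin n → ℝ),
      0 ≤ ∑ i, ∑ j, c i * c j * k (xv i) (xv j)) (xs : ι → X)
    {l : ℝ} (hl : l ≠ 0) (v : ι → ℝ) :
    0 ≤ v ⬝ᵥ ((gram k xs + l ^ 2 • 1)⁻¹ *ᵥ v) := by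
  have := (reg_posDef k hsym hpsd xs hl).inv.posSemidef.dotProduct_mulVec_nonneg v
  rwa [star_trivial] at this

lemma reg_smul_eq (xs : ι → X) {l : ℝ} (hl : l ≠ 0) :
    (1 + (l ^ 2)⁻¹ • gram k xs) = (l ^ 2)⁻¹ • (gram k xs + l ^ 2 • 1) := by
  rw [smul_add, smul_smul, inv_mul_cancel₀ (by positivity : (l:ℝ) ^ 2 ≠ 0), one_smul, add_comm]

lemma reg_smul_det_isUnit (hsym : ∀ x y : X, k x y = k y x)
    (hpsd : ∀ (n : ℕ) (xv : Fin n → X) (c : Fin n → ℝ),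
      0 ≤ ∑ i, ∑ j, c i * c j * k (xv i) (xv j)) (xs : ι → X)
    {l : ℝ} (hl : l ≠ 0) : IsUnit (1 + (l ^ 2)⁻¹ • gram k xs).det := by
  rw [reg_smul_eq k xs hl, Matrix.det_smul]
  exact (IsUnit.pow _ (isUnit_iff_ne_zero.mpr (by positivity))).mul
    (reg_det_isUnit k hsym hpsd xs hl)

lemma reg_smul_inv (hsym : ∀ x y : X, k x y = k y x)
    (hpsd : ∀ (n : ℕ) (xv : Fin n → X) (c : Fin n → ℝ),
      0 ≤ ∑ i, ∑ j, c i * c j * k (xv i) (xv j)) (xs : ι → X)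
    {l : ℝ} (hl : l ≠ 0) :
    (1 + (l ^ 2)⁻¹ • gram k xs)⁻¹ = l ^ 2 • (gram k xs + l ^ 2 • 1)⁻¹ := by
  apply Matrix.inv_eq_right_inv
  rw [reg_smul_eq k xs hl, Matrix.smul_mul, Matrix.mul_smul, smul_smul,
    inv_mul_cancel₀ (by positivity : (l:ℝ) ^ 2 ≠ 0), one_smul,
    Matrix.mul_nonsing_inv _ (reg_det_isUnit k hsym hpsd xs hl)]

lemma det_step (hsym : ∀ x y : X, k x y = k y x)
    (hpsd : ∀ (n : ℕ) (xv : Fin n → X) (c : Fin n → ℝ),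
      0 ≤ ∑ i, ∑ j, c i * c j * k (xv i) (xv j))
    (xseq : ℕ → X) (t : ℕ) {l : ℝ} (hl : l ≠ 0) :
    (1 + (l ^ 2)⁻¹ • gram k (prefN xseq (t + 1))).det
      = (1 + (l ^ 2)⁻¹ • gram k (prefN xseq t)).det
        * (1 + postVar k (prefN xseq t) l (xseq t) / l ^ 2) := by
  classical
  set G := gram k (prefN xseq t) with hG
  set Mt : Matrix (Fin t) (Fin t) ℝ := 1 + (l ^ 2)⁻¹ • G with hMt
  set B0 : Matrix (Fin t) (Fin 1) ℝ := fun i _ => k (xseq i) (xseq t) with hB0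
  set C0 : Matrix (Fin 1) (Fin t) ℝ := fun _ j => k (xseq t) (xseq j) with hC0
  set D0 : Matrix (Fin 1) (Fin 1) ℝ := fun _ _ => k (xseq t) (xseq t) with hD0
  have hsubG : (gram k (prefN xseq (t + 1))).submatrix finSumFinEquiv finSumFinEquiv
      = Matrix.fromBlocks G B0 C0 D0 := by
    ext p q
    rcases p with i | i <;> rcases q with j | j <;>
      simp [_root_.gram, prefN, Matrix.submatrix_apply, finSumFinEquiv_apply_left,
        finSumFinEquiv_apply_right, Fin.coe_castAdd, Fin.coe_natAdd, Fin.val_eq_zero,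
        hG, hB0, hC0, hD0] <;> rfl
  have hblocks : ((1 : Matrix (Fin (t+1)) (Fin (t+1)) ℝ)
        + (l ^ 2)⁻¹ • gram k (prefN xseq (t + 1))).submatrix finSumFinEquiv finSumFinEquiv
      = Matrix.fromBlocks Mt ((l ^ 2)⁻¹ • B0) ((l ^ 2)⁻¹ • C0)
          (1 + (l ^ 2)⁻¹ • D0) := by
    have hadd : ((1 : Matrix (Fin (t+1)) (Fin (t+1)) ℝ)
          + (l ^ 2)⁻¹ • gram k (prefN xseq (t + 1))).submatrix
            (finSumFinEquiv : Fin t ⊕ Fin 1 ≃ Fin (t+1)) finSumFinEquiv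
        = (1 : Matrix (Fin (t+1)) (Fin (t+1)) ℝ).submatrix finSumFinEquiv finSumFinEquiv
          + (l ^ 2)⁻¹ • (gram k (prefN xseq (t + 1))).submatrix finSumFinEquiv
              finSumFinEquiv := by
      ext i j; simp [Matrix.submatrix_apply, Matrix.one_apply, EmbeddingLike.apply_eq_iff_eq]
    rw [hadd, hsubG, Matrix.submatrix_one_equiv, ← Matrix.fromBlocks_one,
      Matrix.fromBlocks_smul, Matrix.fromBlocks_add]
    simp [hMt]
  have hMtdet : IsUnit Mt.det := reg_smul_det_isUnit k hsym hpsd (prefN xseq t) hl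
  haveI : Invertible Mt := Mt.invertibleOfIsUnitDet hMtdet
  have hdet1 : (1 + (l ^ 2)⁻¹ • gram k (prefN xseq (t + 1))).det
      = Mt.det * ((1 + (l ^ 2)⁻¹ • D0) - ((l ^ 2)⁻¹ • C0) * ⅟Mt * ((l ^ 2)⁻¹ • B0)).det := by
    rw [← Matrix.det_submatrix_equiv_self finSumFinEquiv, hblocks,
      Matrix.det_fromBlocks₁₁]
  rw [hdet1]
  congr 1
  have hMtinv : (⅟Mt : Matrix (Fin t) (Fin t) ℝ)
      = l ^ 2 • (G + l ^ 2 • 1)⁻¹ := by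
    rw [Matrix.invOf_eq_nonsing_inv, hMt, reg_smul_inv k hsym hpsd (prefN xseq t) hl]
  set N := (G + l ^ 2 • (1 : Matrix (Fin t) (Fin t) ℝ))⁻¹ with hN
  have hprod : ((l ^ 2)⁻¹ • C0) * ⅟Mt * ((l ^ 2)⁻¹ • B0)
      = (l ^ 2)⁻¹ • (C0 * N * B0) := by
    rw [hMtinv]
    simp only [Matrix.smul_mul, Matrix.mul_smul, smul_smul]
    congr 1
    field_simp
  rw [hprod, Matrix.det_fin_one]
  have hentry : (C0 * N * B0) 0 0
      = kvec k (prefN xseq t) (xseq t) ⬝ᵥ (N *ᵥ kvec k (prefN xseq t) (xseq t)) := by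
    have h1 : (C0 * N * B0) 0 0
        = ∑ j : Fin t, ∑ i : Fin t,
            k (xseq t) (xseq ↑i) * N i j * k (xseq ↑j) (xseq t) := by
      simp only [Matrix.mul_apply, Finset.sum_mul]; rfl
    rw [h1, Finset.sum_comm]
    simp only [dotProduct, Matrix.mulVec, kvec, prefN, Finset.mul_sum]
    refine Finset.sum_congr rfl fun i _ => Finset.sum_congr rfl fun j _ => ?_
    rw [hsym (xseq t) (xseq ↑i)]
    ring
  simp only [Matrix.sub_apply, Matrix.add_apply, Matrix.smul_apply, Matrix.one_apply_eq,
    smul_eq_mul, hentry]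
  rw [postVar]
  have : kvec k (prefN xseq t) (xseq t) ⬝ᵥ ((gram k (prefN xseq t) + l ^ 2 • 1)⁻¹ *ᵥ
      kvec k (prefN xseq t) (xseq t))
      = kvec k (prefN xseq t) (xseq t) ⬝ᵥ (N *ᵥ kvec k (prefN xseq t) (xseq t)) := by
    rw [hN, hG]
  rw [this]
  simp only [hD0]
  field_simp
  ring

lemma det_prod (hsym : ∀ x y : X, k x y = k y x)
    (hpsd : ∀ (n : ℕ) (xv : Fin n → X) (c : Fin n → ℝ),
      0 ≤ ∑ i, ∑ j, c i * c j * k (xv i) (xv j))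
    (xseq : ℕ → X) {l : ℝ} (hl : l ≠ 0) (T : ℕ) :
    (1 + (l ^ 2)⁻¹ • gram k (prefN xseq T)).det
      = ∏ t ∈ Finset.range T, (1 + postVar k (prefN xseq t) l (xseq t) / l ^ 2) := by
  induction T with
  | zero => simp [Matrix.det_isEmpty]
  | succ T ih => rw [det_step k hsym hpsd xseq T hl, ih, Finset.prod_range_succ]

end GpUcbAux

lemma exp_one_lt_four : Real.exp 1 < 4 :=
  lt_trans Real.exp_one_lt_d9 (by norm_num)

lemma gain_arith (CMat ν : ℝ) (d : ℕ) (hd : 1 ≤ d) (hν : 0 < ν) (hCMat : 0 < CMat)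
    (Ctil : ℝ) (hCtil : Ctil = max 1
      ((2 + 2 * ν / (d : ℝ)) ^ (2 * ν / (d : ℝ)) * (6 * CMat) ^ (1 + 2 * ν / (d : ℝ))))
    (T : ℕ) (hT : 4 ≤ T)
    (lam2 : ℝ)
    (hlam2 : lam2 = Ctil * (T : ℝ) ^ (-(2 * ν / (d : ℝ))) * Real.log (T : ℝ) ^ (2 * ν / (d : ℝ)))
    (hlt : lam2 < 1) :
    CMat * ((T : ℝ) / lam2) ^ ((d : ℝ) / (2 * ν + (d : ℝ))) *
      Real.log ((T : ℝ) / lam2) ^ (2 * ν / (2 * ν + (d : ℝ))) ≤ (T : ℝ) / 6 := by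
  have hdpos : (0:ℝ) < (d:ℝ) := by exact_mod_cast hd
  set β : ℝ := 2 * ν / (d : ℝ) with hβ
  set p : ℝ := (d : ℝ) / (2 * ν + (d : ℝ)) with hp
  set q : ℝ := 2 * ν / (2 * ν + (d : ℝ)) with hq
  have hden : (0:ℝ) < 2 * ν + (d:ℝ) := by linarith
  have hβpos : 0 < β := by positivity
  have hppos : 0 < p := by positivity
  have hqpos : 0 < q := by positivity
  have hpq : p + q = 1 := by rw [hp, hq]; field_simp; ring
  have hβp : β * p = q := by rw [hβ, hp, hq]; field_simp
  have honeβp : (1 + β) * p = 1 := by rw [hβ, hp]; field_simp; ring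
  have ht4 : (4:ℝ) ≤ (T:ℝ) := by exact_mod_cast hT
  have ht0 : (0:ℝ) < (T:ℝ) := by linarith
  have hlogt1 : 1 < Real.log (T:ℝ) := by
    rw [show (1:ℝ) = Real.log (Real.exp 1) from (Real.log_exp 1).symm]
    exact Real.log_lt_log (Real.exp_pos 1) (lt_of_lt_of_le exp_one_lt_four ht4)
  have hlogt0 : 0 < Real.log (T:ℝ) := by linarith
  have hCtil1 : 1 ≤ Ctil := hCtil ▸ le_max_left _ _
  have htβpos : (0:ℝ) < (T:ℝ) ^ (-β) := Real.rpow_pos_of_pos ht0 _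
  have hlam2pos : 0 < lam2 := by
    rw [hlam2]
    have h := Real.rpow_pos_of_pos hlogt0 β
    positivity
  have hlam2lb : (T:ℝ) ^ (-β) ≤ lam2 := by
    rw [hlam2]
    have h1 : (1:ℝ) ≤ Real.log (T:ℝ) ^ β := by
      rw [show (1:ℝ) = 1 ^ β from (Real.one_rpow β).symm]
      exact Real.rpow_le_rpow zero_le_one hlogt1.le hβpos.le
    nlinarith [mul_nonneg (mul_nonneg (sub_nonneg.mpr hCtil1) htβpos.le)
        (by positivity : (0:ℝ) ≤ Real.log (T:ℝ) ^ β),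
      mul_nonneg htβpos.le (sub_nonneg.mpr h1)]
  have hdivpos : 0 < (T:ℝ) / lam2 := div_pos ht0 hlam2pos
  have hdivge : (T:ℝ) ≤ (T:ℝ) / lam2 := by
    rw [le_div_iff₀ hlam2pos]
    nlinarith
  have hlogdivpos : 0 < Real.log ((T:ℝ) / lam2) := by
    apply Real.log_pos; linarith
  have hdivle : (T:ℝ) / lam2 ≤ (T:ℝ) ^ (1 + β) := by
    have h1 : (T:ℝ) / lam2 ≤ (T:ℝ) / (T:ℝ) ^ (-β) :=
      div_le_div_of_nonneg_left ht0.le htβpos hlam2lb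
    have h2 : (T:ℝ) / (T:ℝ) ^ (-β) = (T:ℝ) ^ (1 + β) := by
      rw [Real.rpow_add ht0, Real.rpow_one, Real.rpow_neg ht0.le, div_eq_mul_inv, inv_inv]
    linarith [h2 ▸ h1]
  have hlogdivle : Real.log ((T:ℝ) / lam2) ≤ (1 + β) * Real.log (T:ℝ) := by
    calc Real.log ((T:ℝ) / lam2) ≤ Real.log ((T:ℝ) ^ (1 + β)) :=
          Real.log_le_log hdivpos hdivle
      _ = (1 + β) * Real.log (T:ℝ) := Real.log_rpow ht0 _
  have step1 : CMat * ((T:ℝ) / lam2) ^ p * Real.log ((T:ℝ) / lam2) ^ q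
      ≤ CMat * ((T:ℝ) / lam2) ^ p * ((1 + β) * Real.log (T:ℝ)) ^ q := by
    have := Real.rpow_le_rpow hlogdivpos.le hlogdivle hqpos.le
    have hb : 0 ≤ CMat * ((T:ℝ) / lam2) ^ p := by positivity
    nlinarith [Real.rpow_nonneg hlogdivpos.le q]
  have hlam2p : lam2 ^ p = Ctil ^ p * (T:ℝ) ^ (-q) * Real.log (T:ℝ) ^ q := by
    rw [hlam2, Real.mul_rpow (by positivity) (by positivity),
      Real.mul_rpow (by positivity) (Real.rpow_nonneg ht0.le _),
      ← Real.rpow_mul ht0.le, ← Real.rpow_mul hlogt0.le]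
    rw [show -β * p = -q by rw [← hβp]; ring, hβp]
  have e1 : (T:ℝ) ^ p * (T:ℝ) ^ q = (T:ℝ) := by
    rw [← Real.rpow_add ht0, hpq, Real.rpow_one]
  have hTq : (0:ℝ) < (T:ℝ) ^ q := Real.rpow_pos_of_pos ht0 q
  have hTp : (0:ℝ) < (T:ℝ) ^ p := Real.rpow_pos_of_pos ht0 p
  have hCtp : (0:ℝ) < Ctil ^ p := Real.rpow_pos_of_pos (by linarith) p
  have hlq : (0:ℝ) < Real.log (T:ℝ) ^ q := Real.rpow_pos_of_pos hlogt0 q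
  have heq : CMat * ((T:ℝ)/lam2) ^ p * ((1 + β) * Real.log (T:ℝ)) ^ q
      = CMat * (1 + β) ^ q * (T:ℝ) / Ctil ^ p := by
    calc CMat * ((T:ℝ)/lam2) ^ p * ((1 + β) * Real.log (T:ℝ)) ^ q
        = CMat * ((T:ℝ) ^ p / (Ctil ^ p * ((T:ℝ) ^ q)⁻¹ * Real.log (T:ℝ) ^ q))
            * ((1 + β) ^ q * Real.log (T:ℝ) ^ q) := by
          rw [Real.div_rpow ht0.le hlam2pos.le, hlam2p,
            Real.mul_rpow (by positivity) hlogt0.le, Real.rpow_neg ht0.le]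
      _ = CMat * (1 + β) ^ q * ((T:ℝ) ^ p * (T:ℝ) ^ q) / Ctil ^ p := by
          field_simp
      _ = CMat * (1 + β) ^ q * (T:ℝ) / Ctil ^ p := by rw [e1]
  have hCp : 6 * CMat * (2 + β) ^ q ≤ Ctil ^ p := by
    have h0 : (2 + β) ^ β * (6 * CMat) ^ (1 + β) ≤ Ctil := hCtil ▸ le_max_right _ _
    have h1 : ((2 + β) ^ β * (6 * CMat) ^ (1 + β)) ^ p ≤ Ctil ^ p :=
      Real.rpow_le_rpow (by positivity) h0 hppos.le
    have h2 : ((2 + β) ^ β * (6 * CMat) ^ (1 + β)) ^ p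
        = (2 + β) ^ q * (6 * CMat) := by
      rw [Real.mul_rpow (by positivity) (by positivity),
        ← Real.rpow_mul (by positivity : (0:ℝ) ≤ 2 + β),
        ← Real.rpow_mul (by positivity : (0:ℝ) ≤ 6 * CMat), hβp, honeβp, Real.rpow_one]
    rw [h2] at h1
    linarith
  have h12 : (1 + β) ^ q ≤ (2 + β) ^ q :=
    Real.rpow_le_rpow (by positivity) (by linarith) hqpos.le
  have hfin : CMat * (1 + β) ^ q * (T:ℝ) / Ctil ^ p ≤ (T:ℝ) / 6 := by
    have hnum : (0:ℝ) ≤ CMat * (1 + β) ^ q * (T:ℝ) := by positivity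
    have hden6 : (0:ℝ) < 6 * CMat * (2 + β) ^ q := by positivity
    have h6 : CMat * (1 + β) ^ q * (T:ℝ) / Ctil ^ p
        ≤ CMat * (1 + β) ^ q * (T:ℝ) / (6 * CMat * (2 + β) ^ q) :=
      div_le_div_of_nonneg_left hnum hden6 hCp
    have h7 : CMat * (1 + β) ^ q * (T:ℝ) / (6 * CMat * (2 + β) ^ q) ≤ (T:ℝ) / 6 := by
      rw [div_le_div_iff₀ hden6 (by norm_num : (0:ℝ) < 6)]
      have hh := mul_nonneg (mul_nonneg hCMat.le ht0.le) (sub_nonneg.mpr h12)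
      linarith
    linarith
  calc CMat * ((T:ℝ) / lam2) ^ p * Real.log ((T:ℝ) / lam2) ^ q
      ≤ CMat * ((T:ℝ) / lam2) ^ p * ((1 + β) * Real.log (T:ℝ)) ^ q := step1
    _ = CMat * (1 + β) ^ q * (T:ℝ) / Ctil ^ p := heq
    _ ≤ (T:ℝ) / 6 := hfin

lemma log_third_imp (u : ℝ) (hu : 0 ≤ u) (h : Real.log (1 + u) ≤ 1/3) : u ≤ 1 := by
  by_contra hgt
  push_neg at hgt
  have h2 : Real.log 2 ≤ Real.log (1 + u) :=
    Real.log_le_log (by norm_num) (by linarith)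
  have := Real.log_two_gt_d9
  linarith

/-- Simple regret for GP-UCB under a Matérn-type information-gain bound. -/
theorem gp_ucb_simple_regret_matern
{X : Type*} [Nonempty X] (k : X → X → ℝ)
    (hsym : ∀ x y : X, k x y = k y x)
    (hpsd : ∀ (n : ℕ) (xv : Fin n → X) (c : Fin n → ℝ),
      0 ≤ ∑ i, ∑ j, c i * c j * k (xv i) (xv j))
    (hk1 : ∀ x : X, k x x ≤ 1)
    (CMat lamBar : ℝ) (hCMat : 0 < CMat) (hlamBar : 0 < lamBar)
    (T0 : ℕ) (hT0 : 2 ≤ T0) (d : ℕ) (hd : 1 ≤ d) (ν : ℝ) (hν : 0 < ν)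
    (hgain : ∀ lam : ℝ, 0 < lam → lam ≤ lamBar → ∀ t : ℕ, T0 ≤ t →
      mig k t lam ≤ ENNReal.ofReal
        (CMat * ((t : ℝ) / lam ^ 2) ^ ((d : ℝ) / (2 * ν + (d : ℝ))) *
          Real.log ((t : ℝ) / lam ^ 2) ^ (2 * ν / (2 * ν + (d : ℝ)))))
    (Ctil : ℝ) (hCtil : Ctil = max 1
      ((2 + 2 * ν / (d : ℝ)) ^ (2 * ν / (d : ℝ)) * (6 * CMat) ^ (1 + 2 * ν / (d : ℝ))))
    (Tlam : ℕ) (hTlam : ∀ t : ℕ, Tlam ≤ t →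
      Ctil * (t : ℝ) ^ (-(2 * ν / (d : ℝ))) * Real.log (t : ℝ) ^ (2 * ν / (d : ℝ)) ≤ lamBar ^ 2)
    (TMat : ℕ) (hTMat : TMat = max 4 (max T0 Tlam))
(f : X → ℝ) (n : ℕ) (c : Fin n → ℝ) (xv : Fin n → X)
    (hf : ∀ x : X, f x = ∑ i, c i * k (xv i) x)
    (B : ℝ) (hB : 0 < B)
    (hnorm : Real.sqrt (∑ i, ∑ j, c i * c j * k (xv i) (xv j)) ≤ B)
    (xstar : X) (hstar : ∀ x : X, f x ≤ f xstar)
    (xseq : ℕ → X)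
    (hinv : ∀ t : ℕ, 1 ≤ t → IsUnit (gram k (prefN xseq t)).det)
    (hucb : ∀ (t : ℕ) (x : X),
      postMean k (prefN xseq t) f x + B * postStdInv k (prefN xseq t) x ≤
        postMean k (prefN xseq t) f (xseq t) + B * postStdInv k (prefN xseq t) (xseq t)) :
    ∀ T : ℕ, TMat ≤ T →
      f xstar - sSup (Set.range fun t : Fin T => f (xseq t.1)) ≤
        2 * B * Real.sqrt Ctil * (T : ℝ) ^ (-(ν / (d : ℝ))) *
          Real.log (T : ℝ) ^ (ν / (d : ℝ)) := by
  intro T hT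
  have hT4 : 4 ≤ T := le_trans (hTMat ▸ le_max_left _ _) hT
  have hT0T : T0 ≤ T := le_trans (hTMat ▸ le_trans (le_max_left _ _) (le_max_right 4 _)) hT
  have hTlamT : Tlam ≤ T := le_trans (hTMat ▸ le_trans (le_max_right T0 _) (le_max_right 4 _)) hT
  have hdpos : (0:ℝ) < (d:ℝ) := by exact_mod_cast hd
  have ht4 : (4:ℝ) ≤ (T:ℝ) := by exact_mod_cast hT4
  have ht0 : (0:ℝ) < (T:ℝ) := by linarith
  have hlogt1 : 1 < Real.log (T:ℝ) := by
    rw [show (1:ℝ) = Real.log (Real.exp 1) from (Real.log_exp 1).symm]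
    exact Real.log_lt_log (Real.exp_pos 1) (lt_of_lt_of_le exp_one_lt_four ht4)
  have hlogt0 : 0 < Real.log (T:ℝ) := by linarith
  have hCtil1 : 1 ≤ Ctil := hCtil ▸ le_max_left _ _
  set β : ℝ := 2 * ν / (d : ℝ) with hβ
  set lam2 : ℝ := Ctil * (T : ℝ) ^ (-β) * Real.log (T : ℝ) ^ β with hlam2
  have hβpos : 0 < β := by positivity
  have hlam2pos : 0 < lam2 := by
    rw [hlam2]
    have h1 := Real.rpow_pos_of_pos ht0 (-β)
    have h2 := Real.rpow_pos_of_pos hlogt0 β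
    positivity
  set lam : ℝ := Real.sqrt lam2 with hlam
  have hlampos : 0 < lam := Real.sqrt_pos.mpr hlam2pos
  have hlamsq : lam ^ 2 = lam2 := Real.sq_sqrt hlam2pos.le
  -- the target right-hand side equals 2 * B * lam
  have hRHS : 2 * B * Real.sqrt Ctil * (T : ℝ) ^ (-(ν / (d : ℝ))) *
      Real.log (T : ℝ) ^ (ν / (d : ℝ)) = 2 * B * lam := by
    have h1 : Real.sqrt ((T:ℝ) ^ (-β)) = (T:ℝ) ^ (-(ν / (d:ℝ))) := by
      rw [Real.sqrt_eq_rpow, ← Real.rpow_mul ht0.le]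
      congr 1
      rw [hβ]; ring
    have h2 : Real.sqrt (Real.log (T:ℝ) ^ β) = Real.log (T:ℝ) ^ (ν / (d:ℝ)) := by
      rw [Real.sqrt_eq_rpow, ← Real.rpow_mul hlogt0.le]
      congr 1
      rw [hβ]; ring
    rw [hlam, hlam2, Real.sqrt_mul (by positivity) _, Real.sqrt_mul (by linarith) _,
      h1, h2]
    ring
  rw [hRHS]
  -- invertibility of all prefix Gram matrices
  have hdetn : ∀ t : ℕ, IsUnit (gram k (prefN xseq t)).det := by
    intro t
    rcases Nat.eq_zero_or_pos t with h0 | h1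
    · subst h0
      rw [Matrix.det_isEmpty]
      exact isUnit_one
    · exact hinv t h1
  -- uniform confidence bound
  have hσnn : ∀ (t : ℕ) (x : X), 0 ≤ postStdInv k (prefN xseq t) x :=
    fun t x => Real.sqrt_nonneg _
  have hconf : ∀ (t : ℕ) (x : X),
      |f x - postMean k (prefN xseq t) f x| ≤ B * postStdInv k (prefN xseq t) x := by
    intro t x
    calc |f x - postMean k (prefN xseq t) f x|
        ≤ Real.sqrt (∑ i, ∑ j, c i * c j * k (xv i) (xv j)) * postStdInv k (prefN xseq t) x :=
          confidence k hsym hpsd (prefN xseq t) (hdetn t) f c xv hf x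
      _ ≤ B * postStdInv k (prefN xseq t) x :=
          mul_le_mul_of_nonneg_right hnorm (hσnn t x)
  -- |f x| ≤ B
  have hfb : ∀ x : X, |f x| ≤ B := by
    intro x
    have h := hconf 0 x
    have hμ0 : postMean k (prefN xseq 0) f x = 0 := by
      simp [postMean, dotProduct]
    have hσ0 : postStdInv k (prefN xseq 0) x ≤ 1 := by
      rw [postStdInv]
      have : kvec k (prefN xseq 0) x ⬝ᵥ ((gram k (prefN xseq 0))⁻¹ *ᵥ kvec k (prefN xseq 0) x)
          = 0 := by simp [dotProduct]
      rw [this, sub_zero]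
      exact Real.sqrt_le_one.mpr (hk1 x)
    rw [hμ0, sub_zero] at h
    calc |f x| ≤ B * postStdInv k (prefN xseq 0) x := h
      _ ≤ B * 1 := mul_le_mul_of_nonneg_left hσ0 hB.le
      _ = B := mul_one B
  -- per-step regret bound
  have hreg : ∀ t : ℕ, f xstar - f (xseq t) ≤ 2 * B * postStdInv k (prefN xseq t) (xseq t) := by
    intro t
    have h1 := abs_le.mp (hconf t xstar)
    have h2 := hucb t xstar
    have h3 := abs_le.mp (hconf t (xseq t))
    linarith [h1.2, h3.1]
  -- sSup is at least any queried value
  have hsup : ∀ t : ℕ, t < T → f (xseq t) ≤ sSup (Set.range fun t : Fin T => f (xseq t.1)) := by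
    intro t ht
    exact le_csSup (Set.Finite.bddAbove (Set.finite_range _)) ⟨⟨t, ht⟩, rfl⟩
  by_cases hcase : 1 ≤ lam2
  · -- trivial case : the bound exceeds 2B
    have hlam1 : 1 ≤ lam := by
      rw [hlam, show (1:ℝ) = Real.sqrt 1 from Real.sqrt_one.symm]
      exact Real.sqrt_le_sqrt hcase
    have h0T : 0 < T := by omega
    have h1 := hsup 0 h0T
    have h2 := abs_le.mp (hfb xstar)
    have h3 := abs_le.mp (hfb (xseq 0))
    nlinarith [h1, h2.2, h3.1]
  · push_neg at hcase
    -- information-gain bound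
    have hlamle : lam ≤ lamBar := by
      have h1 := hTlam T hTlamT
      rw [hlam]
      calc Real.sqrt lam2 ≤ Real.sqrt (lamBar ^ 2) := Real.sqrt_le_sqrt (by rw [hlam2, hβ]; exact h1)
        _ = lamBar := Real.sqrt_sq hlamBar.le
    have hg := hgain lam hlampos hlamle T hT0T
    set D : ℝ := (1 + (lam ^ 2)⁻¹ • gram k (prefN xseq T)).det with hD
    have hmig_lb : ENNReal.ofReal ((1/2) * Real.log D) ≤ mig k T lam := by
      rw [mig]
      exact le_iSup (fun xs : Fin T → X => ENNReal.ofReal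
        ((1 / 2) * Real.log ((1 + (lam ^ 2)⁻¹ • gram k xs).det))) (prefN xseq T)
    have harith : CMat * ((T : ℝ) / lam ^ 2) ^ ((d : ℝ) / (2 * ν + (d : ℝ))) *
        Real.log ((T : ℝ) / lam ^ 2) ^ (2 * ν / (2 * ν + (d : ℝ))) ≤ (T:ℝ) / 6 := by
      rw [hlamsq]
      exact gain_arith CMat ν d hd hν hCMat Ctil hCtil T hT4 lam2 hlam2 hcase
    have hdivgt1 : 1 < (T:ℝ) / lam ^ 2 := by
      rw [hlamsq, lt_div_iff₀ hlam2pos]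
      nlinarith
    have hlogdivpos : 0 < Real.log ((T:ℝ) / lam ^ 2) := Real.log_pos hdivgt1
    have hRnn : 0 ≤ CMat * ((T : ℝ) / lam ^ 2) ^ ((d : ℝ) / (2 * ν + (d : ℝ))) *
        Real.log ((T : ℝ) / lam ^ 2) ^ (2 * ν / (2 * ν + (d : ℝ))) := by
      have h1 : (0:ℝ) < (T:ℝ) / lam ^ 2 := by linarith
      positivity
    have hlogD : (1/2) * Real.log D ≤ (T:ℝ) / 6 := by
      have h1 : ENNReal.ofReal ((1/2) * Real.log D)
          ≤ ENNReal.ofReal (CMat * ((T : ℝ) / lam ^ 2) ^ ((d : ℝ) / (2 * ν + (d : ℝ))) *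
            Real.log ((T : ℝ) / lam ^ 2) ^ (2 * ν / (2 * ν + (d : ℝ)))) :=
        le_trans hmig_lb hg
      have h2 := (ENNReal.ofReal_le_ofReal_iff hRnn).mp h1
      linarith
    -- determinant as product
    set s : ℕ → ℝ := fun t => postVar k (prefN xseq t) lam (xseq t) with hs
    have hDprod : D = ∏ t ∈ Finset.range T, (1 + s t / lam ^ 2) :=
      det_prod k hsym hpsd xseq (ne_of_gt hlampos) T
    have hs_nn : ∀ t : ℕ, 0 ≤ s t := by
      intro t
      have h1 := resid_nonneg k hsym hpsd (prefN xseq t) (hdetn t) (xseq t)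
      have h2 := quad_inv_mono k hsym hpsd (prefN xseq t) (hdetn t)
        (ne_of_gt hlampos) (kvec k (prefN xseq t) (xseq t))
      rw [hs]
      simp only [postVar]
      linarith
    have hfac1 : ∀ t : ℕ, (1:ℝ) ≤ 1 + s t / lam ^ 2 := by
      intro t
      have := hs_nn t
      have h2 : 0 ≤ s t / lam ^ 2 := by positivity
      linarith
    have hlogDsum : Real.log D = ∑ t ∈ Finset.range T, Real.log (1 + s t / lam ^ 2) := by
      rw [hDprod]
      exact Real.log_prod fun t _ => by linarith [hfac1 t]
    -- pigeonhole : some summand is at most 1/3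
    have hex : ∃ t, t < T ∧ Real.log (1 + s t / lam ^ 2) ≤ 1/3 := by
      by_contra hno
      push_neg at hno
      have hlt : ∀ t ∈ Finset.range T, (1:ℝ)/3 < Real.log (1 + s t / lam ^ 2) := by
        intro t htm
        exact hno t (Finset.mem_range.mp htm)
      have hsum : ∑ _t ∈ Finset.range T, (1:ℝ)/3
          < ∑ t ∈ Finset.range T, Real.log (1 + s t / lam ^ 2) :=
        Finset.sum_lt_sum_of_nonempty (Finset.nonempty_range_iff.mpr (by omega)) hlt
      rw [Finset.sum_const, Finset.card_range, nsmul_eq_mul] at hsum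
      rw [hlogDsum] at hlogD
      linarith
    obtain ⟨t, htT, hlog13⟩ := hex
    have hu : s t / lam ^ 2 ≤ 1 := log_third_imp _ (div_nonneg (hs_nn t) (by positivity)) hlog13
    have hst : s t ≤ lam ^ 2 := by
      rw [div_le_one (by positivity)] at hu
      exact hu
    -- posterior std at the good step is at most lam
    have hσle : postStdInv k (prefN xseq t) (xseq t) ≤ lam := by
      have h2 := quad_inv_mono k hsym hpsd (prefN xseq t) (hdetn t)
        (ne_of_gt hlampos) (kvec k (prefN xseq t) (xseq t))
      have h3 : k (xseq t) (xseq t) - kvec k (prefN xseq t) (xseq t) ⬝ᵥ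
          ((gram k (prefN xseq t))⁻¹ *ᵥ kvec k (prefN xseq t) (xseq t)) ≤ lam ^ 2 := by
        have h4 : s t = k (xseq t) (xseq t) - kvec k (prefN xseq t) (xseq t) ⬝ᵥ
            ((gram k (prefN xseq t) + lam ^ 2 • 1)⁻¹ *ᵥ kvec k (prefN xseq t) (xseq t)) := by
          rw [hs]; rfl
        rw [h4] at hst
        linarith
      calc postStdInv k (prefN xseq t) (xseq t) ≤ Real.sqrt (lam ^ 2) :=
            Real.sqrt_le_sqrt h3
        _ = lam := Real.sqrt_sq hlampos.le
    have hfinal := hreg t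
    have hsupt := hsup t htT
    nlinarith [hσle, hfinal, hsupt, hB]
end
end
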